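/- arXiv:2507.00160 — 10 statements merged into one kernel-verified Lean document; each statement's English description precedes it below -/
import Mathlib

section
/- Let p be a real number with p ≥ 2. Then for all real numbers a and b, (|a|^{p-2}a − |b|^{p-2}b)(a − b) ≥ (1/2)|a|^{p-2}(a − b)^2 + (1/2)|b|^{p-2}(a − b)^2. -/
/-- For `p ≥ 2` and all real `a, b`,
`(|a|^{p-2}a − |b|^{p-2}b)(a − b) ≥ (1/2)|a|^{p-2}(a − b)^2 + (1/2)|b|^{p-2}(a − b)^2`,
where the powers are real (rpow) powers. -/
theorem signedPower_monotonicity (p : ℝ) (hp : 2 ≤ p) (a b : ℝ) :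
    (|a| ^ (p - 2) * a - |b| ^ (p - 2) * b) * (a - b) ≥
      (1 / 2) * |a| ^ (p - 2) * (a - b) ^ 2 + (1 / 2) * |b| ^ (p - 2) * (a - b) ^ 2 := by
  have key : 0 ≤ (|a| ^ (p - 2) - |b| ^ (p - 2)) * (a ^ 2 - b ^ 2) := by
    rcases le_total |a| |b| with h | h
    · have h1 : |a| ^ (p - 2) ≤ |b| ^ (p - 2) :=
        Real.rpow_le_rpow (abs_nonneg a) h (by linarith)
      have h2 : a ^ 2 ≤ b ^ 2 := by
        rw [← sq_abs a, ← sq_abs b]; exact pow_le_pow_left₀ (abs_nonneg a) h 2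
      exact mul_nonneg_iff.mpr (Or.inr ⟨by linarith, by linarith⟩)
    · have h1 : |b| ^ (p - 2) ≤ |a| ^ (p - 2) :=
        Real.rpow_le_rpow (abs_nonneg b) h (by linarith)
      have h2 : b ^ 2 ≤ a ^ 2 := by
        rw [← sq_abs a, ← sq_abs b]; exact pow_le_pow_left₀ (abs_nonneg b) h 2
      exact mul_nonneg (by linarith) (by linarith)
  nlinarith [key]
end

section
/- Let (Ω, μ) be a measure space, p a real number with p ≥ 2, and u, v ∈ L^p(μ) real-valued. Then the function (|u|^{p-2}u − |v|^{p-2}v)(u − v) is integrable and ∫_Ω (|u|^{p-2}u − |v|^{p-2}v)(u − v) dμ ≥ (1/2)∫_Ω |u|^{p-2}(u − v)^2 dμ + (1/2)∫_Ω |v|^{p-2}(u − v)^2 dμ. -/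
open MeasureTheory Real

-- pointwise key inequality
private lemma key_pw (p : ℝ) (hp : 2 ≤ p) (a b : ℝ) :
    (1/2) * |a| ^ (p-2) * (a-b)^2 + (1/2) * |b| ^ (p-2) * (a-b)^2 ≤
      (|a| ^ (p-2) * a - |b| ^ (p-2) * b) * (a-b) := by
  set A := |a| ^ (p-2) with hA
  set B := |b| ^ (p-2) with hB
  have h : 0 ≤ (A - B) * (a^2 - b^2) := by
    rcases le_total |a| |b| with h1 | h1
    · have hAB : A ≤ B := Real.rpow_le_rpow (abs_nonneg a) h1 (by linarith)
      have hab : a^2 ≤ b^2 := by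
        have := sq_abs a; have := sq_abs b
        nlinarith [abs_nonneg a, abs_nonneg b]
      nlinarith
    · have hAB : B ≤ A := Real.rpow_le_rpow (abs_nonneg b) h1 (by linarith)
      have hab : b^2 ≤ a^2 := by
        have := sq_abs a; have := sq_abs b
        nlinarith [abs_nonneg a, abs_nonneg b]
      nlinarith
  nlinarith [h]

private lemma rpow_mul_sq (p : ℝ) (hp : 2 ≤ p) (a : ℝ) :
    |a| ^ (p-2) * a^2 = |a| ^ p := by
  have : |a| ^ (p - 2 + 2) = |a| ^ (p-2) * |a| ^ (2:ℝ) :=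
    Real.rpow_add' (abs_nonneg a) (by linarith)
  rw [show p - 2 + 2 = p by ring] at this
  rw [this, show ((2:ℝ) = ((2:ℕ):ℝ)) by norm_num, Real.rpow_natCast, sq_abs]

private lemma cross_bound (p : ℝ) (hp : 2 ≤ p) (a b : ℝ) :
    |a| ^ (p-2) * b^2 ≤ |a| ^ p + |b| ^ p := by
  rcases le_total |a| |b| with h1 | h1
  · have hAB : |a| ^ (p-2) ≤ |b| ^ (p-2) := Real.rpow_le_rpow (abs_nonneg a) h1 (by linarith)
    have := rpow_mul_sq p hp b
    nlinarith [sq_nonneg b, Real.rpow_nonneg (abs_nonneg a) p]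
  · have hab : b^2 ≤ a^2 := by
      have := sq_abs a; have := sq_abs b
      nlinarith [abs_nonneg a, abs_nonneg b]
    have := rpow_mul_sq p hp a
    nlinarith [Real.rpow_nonneg (abs_nonneg a) (p-2), Real.rpow_nonneg (abs_nonneg b) p]

-- bound on the main integrand
private lemma main_bound (p : ℝ) (hp : 2 ≤ p) (a b : ℝ) :
    (|a| ^ (p-2) * a - |b| ^ (p-2) * b) * (a-b) ≤ 4 * (|a| ^ p + |b| ^ p) := by
  have hA : (0:ℝ) ≤ |a| ^ (p-2) := Real.rpow_nonneg (abs_nonneg a) _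
  have hB : (0:ℝ) ≤ |b| ^ (p-2) := Real.rpow_nonneg (abs_nonneg b) _
  have h1 := rpow_mul_sq p hp a
  have h2 := rpow_mul_sq p hp b
  have h3 := cross_bound p hp a b
  have h4 := cross_bound p hp b a
  nlinarith [mul_nonneg hA (sq_nonneg (a+b)), mul_nonneg hB (sq_nonneg (a+b))]

private lemma aux_bound (p : ℝ) (hp : 2 ≤ p) (a b : ℝ) :
    |a| ^ (p-2) * (a-b)^2 ≤ 4 * (|a| ^ p + |b| ^ p) := by
  have hA : (0:ℝ) ≤ |a| ^ (p-2) := Real.rpow_nonneg (abs_nonneg a) _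
  have h1 := rpow_mul_sq p hp a
  have h3 := cross_bound p hp a b
  nlinarith [mul_nonneg hA (sq_nonneg (a+b)), Real.rpow_nonneg (abs_nonneg b) p]

private lemma main_nonneg (p : ℝ) (hp : 2 ≤ p) (a b : ℝ) :
    0 ≤ (|a| ^ (p-2) * a - |b| ^ (p-2) * b) * (a-b) := by
  have := key_pw p hp a b
  have hA : (0:ℝ) ≤ |a| ^ (p-2) := Real.rpow_nonneg (abs_nonneg a) _
  have hB : (0:ℝ) ≤ |b| ^ (p-2) := Real.rpow_nonneg (abs_nonneg b) _
  nlinarith [mul_nonneg hA (sq_nonneg (a-b)), mul_nonneg hB (sq_nonneg (a-b))]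

/-- On a measure space `(Ω, μ)`, for `p ≥ 2` and `u, v ∈ L^p(μ)`, the
function `(|u|^{p-2}u − |v|^{p-2}v)(u − v)` is integrable and its integral dominates
`(1/2)∫ |u|^{p-2}(u − v)^2 dμ + (1/2)∫ |v|^{p-2}(u − v)^2 dμ`. -/
theorem integrated_signedPower_monotonicity {Ω : Type*} [MeasurableSpace Ω] (μ : Measure Ω)
    (p : ℝ) (hp : 2 ≤ p) (u v : Ω → ℝ)
    (hum : Measurable u) (hvm : Measurable v)
    (hu : Integrable (fun x => |u x| ^ p) μ)
    (hv : Integrable (fun x => |v x| ^ p) μ) :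
    Integrable (fun x => (|u x| ^ (p - 2) * u x - |v x| ^ (p - 2) * v x) * (u x - v x)) μ ∧
      (∫ x, (|u x| ^ (p - 2) * u x - |v x| ^ (p - 2) * v x) * (u x - v x) ∂μ) ≥
        (1 / 2) * (∫ x, |u x| ^ (p - 2) * (u x - v x) ^ 2 ∂μ) +
          (1 / 2) * (∫ x, |v x| ^ (p - 2) * (u x - v x) ^ 2 ∂μ) := by
  have hg : Integrable (fun x => 4 * (|u x| ^ p + |v x| ^ p)) μ := (hu.add hv).const_mul 4
  have hgnn : ∀ x, (0:ℝ) ≤ 4 * (|u x| ^ p + |v x| ^ p) := fun x => by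
    have := Real.rpow_nonneg (abs_nonneg (u x)) p
    have := Real.rpow_nonneg (abs_nonneg (v x)) p
    positivity
  have hmA : Measurable (fun x => |u x| ^ (p-2)) := (Real.continuous_rpow_const (by linarith : (0:ℝ) ≤ p-2)).measurable.comp hum.abs
  have hmB : Measurable (fun x => |v x| ^ (p-2)) := (Real.continuous_rpow_const (by linarith : (0:ℝ) ≤ p-2)).measurable.comp hvm.abs
  have hmf : Measurable (fun x => (|u x| ^ (p-2) * u x - |v x| ^ (p-2) * v x) * (u x - v x)) :=
    ((hmA.mul hum).sub (hmB.mul hvm)).mul (hum.sub hvm)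
  have hif : Integrable (fun x => (|u x| ^ (p-2) * u x - |v x| ^ (p-2) * v x) * (u x - v x)) μ := by
    refine hg.mono hmf.aestronglyMeasurable (Filter.Eventually.of_forall fun x => ?_)
    rw [Real.norm_eq_abs, Real.norm_eq_abs, abs_of_nonneg (main_nonneg p hp _ _),
      abs_of_nonneg (hgnn x)]
    exact main_bound p hp _ _
  have hig1 : Integrable (fun x => |u x| ^ (p-2) * (u x - v x)^2) μ := by
    refine hg.mono ((hmA.mul ((hum.sub hvm).pow_const 2)).aestronglyMeasurable)
      (Filter.Eventually.of_forall fun x => ?_)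
    rw [Real.norm_eq_abs, Real.norm_eq_abs, abs_of_nonneg
      (mul_nonneg (Real.rpow_nonneg (abs_nonneg _) _) (sq_nonneg _)), abs_of_nonneg (hgnn x)]
    exact aux_bound p hp _ _
  have hig2 : Integrable (fun x => |v x| ^ (p-2) * (u x - v x)^2) μ := by
    refine hg.mono ((hmB.mul ((hum.sub hvm).pow_const 2)).aestronglyMeasurable)
      (Filter.Eventually.of_forall fun x => ?_)
    rw [Real.norm_eq_abs, Real.norm_eq_abs, abs_of_nonneg
      (mul_nonneg (Real.rpow_nonneg (abs_nonneg _) _) (sq_nonneg _)), abs_of_nonneg (hgnn x)]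
    have : |v x| ^ (p-2) * (u x - v x)^2 = |v x| ^ (p-2) * (v x - u x)^2 := by ring
    rw [this]
    have := aux_bound p hp (v x) (u x)
    linarith
  refine ⟨hif, ?_⟩
  have hsum : Integrable (fun x => (1/2) * (|u x| ^ (p-2) * (u x - v x)^2)
      + (1/2) * (|v x| ^ (p-2) * (u x - v x)^2)) μ :=
    (hig1.const_mul _).add (hig2.const_mul _)
  have hmono : (∫ x, ((1/2) * (|u x| ^ (p-2) * (u x - v x)^2)
      + (1/2) * (|v x| ^ (p-2) * (u x - v x)^2)) ∂μ) ≤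
      ∫ x, (|u x| ^ (p-2) * u x - |v x| ^ (p-2) * v x) * (u x - v x) ∂μ := by
    refine integral_mono hsum hif fun x => ?_
    have := key_pw p hp (u x) (v x)
    linarith
  rw [integral_add (hig1.const_mul _) (hig2.const_mul _), integral_const_mul,
    integral_const_mul] at hmono
  exact hmono
end

section
/- Let (Ω, μ) be a measure space, p a real number with p ≥ 2, and u, v ∈ L^p(μ) real-valued. Then ∫_Ω (|u|^{p-2}u − |v|^{p-2}v)(u − v) dμ ≥ 2^{-(p-2)} ‖u − v‖_{L^p(μ)}^p. -/
open MeasureTheory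

lemma rpow_mul_self' (q : ℝ) (hq : q + 1 ≠ 0) (x : ℝ) (hx : 0 ≤ x) :
    x ^ q * x = x ^ (q + 1) := by
  rcases eq_or_lt_of_le hx with h | h
  · simp [← h, Real.zero_rpow hq]
  · rw [Real.rpow_add h, Real.rpow_one]

lemma core_nonneg (p : ℝ) (hp : 2 ≤ p) (t : ℝ) (ht : 0 ≤ t) :
    2 ≤ |1 + t| ^ (p - 2) * (1 + t) - |t - 1| ^ (p - 2) * (t - 1) := by
  have hp1 : (1 : ℝ) ≤ p - 1 := by linarith
  have hp1' : p - 1 ≠ 0 := by linarith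
  have h2 : p - 2 + 1 = p - 1 := by ring
  rcases le_or_gt t 1 with ht1 | ht1
  · have e1 : |1 + t| = 1 + t := abs_of_nonneg (by linarith)
    have e2 : |t - 1| = 1 - t := by rw [abs_sub_comm]; exact abs_of_nonneg (by linarith)
    have k1 : (1 + t) ^ (p - 2) * (1 + t) = (1 + t) ^ (p - 1) := by
      rw [rpow_mul_self' (p - 2) (by linarith) _ (by linarith), h2]
    have k2 : (1 - t) ^ (p - 2) * (1 - t) = (1 - t) ^ (p - 1) := by
      rw [rpow_mul_self' (p - 2) (by linarith) _ (by linarith), h2]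
    rw [e1, e2]
    have conv := (convexOn_rpow hp1).2 (Set.mem_Ici.2 (by linarith : (0:ℝ) ≤ 1 + t))
      (Set.mem_Ici.2 (by linarith : (0:ℝ) ≤ 1 - t)) (by norm_num : (0:ℝ) ≤ 1/2)
      (by norm_num : (0:ℝ) ≤ 1/2) (by norm_num)
    simp only [smul_eq_mul] at conv
    have e3 : (1:ℝ)/2 * (1 + t) + 1/2 * (1 - t) = 1 := by ring
    rw [e3, Real.one_rpow] at conv
    have h3 : (1 - t) ^ (p - 2) * (t - 1) = -((1 - t) ^ (p - 2) * (1 - t)) := by ring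
    rw [h3, k2]
    nlinarith [conv, k1]
  · have e1 : |1 + t| = 1 + t := abs_of_nonneg (by linarith)
    have e2 : |t - 1| = t - 1 := abs_of_nonneg (by linarith)
    rw [e1, e2,
      rpow_mul_self' (p - 2) (by linarith) _ (by linarith),
      rpow_mul_self' (p - 2) (by linarith) _ (by linarith), h2]
    -- (t-1)^(p-1) + 2^(p-1) ≤ (t+1)^(p-1)
    have key : (t - 1) ^ (p - 1) + 2 ^ (p - 1) ≤ (1 + t) ^ (p - 1) := by
      have hA : (0:ℝ) ≤ t - 1 := by linarith
      have hS : (0:ℝ) < 1 + t := by linarith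
      have b1 : (t - 1) ^ (p - 1) = (t - 1) ^ (p - 2) * (t - 1) := by
        rw [rpow_mul_self' (p - 2) (by linarith) _ hA, h2]
      have b2 : (2:ℝ) ^ (p - 1) = 2 ^ (p - 2) * 2 := by
        rw [rpow_mul_self' (p - 2) (by linarith) _ (by norm_num), h2]
      have b3 : (1 + t) ^ (p - 1) = (1 + t) ^ (p - 2) * (1 + t) := by
        rw [rpow_mul_self' (p - 2) (by linarith) _ hS.le, h2]
      have m1 : (t - 1) ^ (p - 2) ≤ (1 + t) ^ (p - 2) :=
        Real.rpow_le_rpow hA (by linarith) (by linarith)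
      have m2 : (2:ℝ) ^ (p - 2) ≤ (1 + t) ^ (p - 2) :=
        Real.rpow_le_rpow (by norm_num) (by linarith) (by linarith)
      rw [b1, b2, b3]
      nlinarith [Real.rpow_nonneg hA (p - 2), Real.rpow_nonneg hS.le (p - 2)]
    have two_le : (2:ℝ) ≤ 2 ^ (p - 1) := by
      calc (2:ℝ) = 2 ^ (1:ℝ) := (Real.rpow_one 2).symm
      _ ≤ 2 ^ (p - 1) := Real.rpow_le_rpow_of_exponent_le one_le_two hp1
    linarith

lemma core_all (p : ℝ) (hp : 2 ≤ p) (t : ℝ) :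
    2 ≤ |1 + t| ^ (p - 2) * (1 + t) - |t - 1| ^ (p - 2) * (t - 1) := by
  rcases le_or_gt 0 t with ht | ht
  · exact core_nonneg p hp t ht
  · have h := core_nonneg p hp (-t) (by linarith)
    have e1 : 1 + -t = -(t - 1) := by ring
    have e2 : -t - 1 = -(1 + t) := by ring
    rw [e1, e2, abs_neg, abs_neg] at h
    simp only [mul_neg] at h
    linarith

lemma f_smul (p : ℝ) (hp : 2 ≤ p) (c x : ℝ) (hc : 0 < c) :
    |c * x| ^ (p - 2) * (c * x) = c ^ (p - 1) * (|x| ^ (p - 2) * x) := by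
  rw [abs_mul, abs_of_pos hc, Real.mul_rpow hc.le (abs_nonneg x),
    show p - 1 = p - 2 + 1 by ring, ← rpow_mul_self' (p - 2) (by linarith) c hc.le]
  ring

lemma ptwise_gt (p : ℝ) (hp : 2 ≤ p) (a b : ℝ) (hab : b < a) :
    2 ^ (-(p - 2)) * |a - b| ^ p ≤ (|a| ^ (p - 2) * a - |b| ^ (p - 2) * b) * (a - b) := by
  set h : ℝ := (a - b) / 2 with hh
  have hhpos : 0 < h := by simp only [hh]; linarith
  set t : ℝ := (a + b) / (a - b) with hts
  have hne : a - b ≠ 0 := by linarith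
  have ha : h * (1 + t) = a := by rw [hh, hts]; field_simp; ring
  have hb : h * (t - 1) = b := by rw [hh, hts]; field_simp; ring
  have key := core_all p hp t
  have hab2 : a - b = 2 * h := by rw [hh]; ring
  have habs : |a - b| = 2 * h := by rw [hab2]; exact abs_of_pos (by linarith)
  have h24 : (2:ℝ) ^ (2:ℝ) = 4 := by
    have h2 := Real.rpow_natCast (2:ℝ) 2
    rw [Nat.cast_ofNat] at h2
    rw [h2]; norm_num
  have c1 : (2:ℝ) ^ (-(p - 2)) * ((2:ℝ) ^ p * h ^ p) = 4 * h ^ p := by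
    rw [← mul_assoc, ← Real.rpow_add two_pos, show -(p - 2) + p = 2 by ring, h24]
  have hhp : 0 < h ^ (p - 1) := Real.rpow_pos_of_pos hhpos _
  have hpp : h ^ (p - 1) * h = h ^ p := by
    rw [rpow_mul_self' (p - 1) (by linarith) h hhpos.le, show p - 1 + 1 = p by ring]
  rw [habs, Real.mul_rpow (by norm_num) hhpos.le, c1, hab2, ← ha, ← hb,
    f_smul p hp h (1 + t) hhpos, f_smul p hp h (t - 1) hhpos]
  nlinarith [mul_nonneg (mul_nonneg (by linarith : (0:ℝ) ≤
    (|1 + t| ^ (p - 2) * (1 + t) - |t - 1| ^ (p - 2) * (t - 1)) - 2) hhp.le) hhpos.le]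

lemma ptwise (p : ℝ) (hp : 2 ≤ p) (a b : ℝ) :
    2 ^ (-(p - 2)) * |a - b| ^ p ≤ (|a| ^ (p - 2) * a - |b| ^ (p - 2) * b) * (a - b) := by
  rcases lt_trichotomy a b with h | h | h
  · have := ptwise_gt p hp b a h
    rw [abs_sub_comm] at this
    nlinarith [this]
  · simp [h, Real.zero_rpow (by linarith : p ≠ 0)]
  · exact ptwise_gt p hp a b h


lemma f_abs_bound (p : ℝ) (hp : 2 ≤ p) (a b : ℝ) :
    |(|a| ^ (p - 2) * a - |b| ^ (p - 2) * b) * (a - b)| ≤ 4 * (|a| ^ p + |b| ^ p) := by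
  set M := max |a| |b| with hM
  have hM0 : 0 ≤ M := le_trans (abs_nonneg a) (le_max_left _ _)
  have e : ∀ x : ℝ, |(|x| ^ (p - 2) * x)| = |x| ^ (p - 1) := by
    intro x
    rw [abs_mul, abs_of_nonneg (Real.rpow_nonneg (abs_nonneg x) _),
      rpow_mul_self' (p - 2) (by linarith) |x| (abs_nonneg x), show p - 2 + 1 = p - 1 by ring]
  have la : |a| ^ (p - 1) ≤ M ^ (p - 1) :=
    Real.rpow_le_rpow (abs_nonneg a) (le_max_left _ _) (by linarith)
  have lb : |b| ^ (p - 1) ≤ M ^ (p - 1) :=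
    Real.rpow_le_rpow (abs_nonneg b) (le_max_right _ _) (by linarith)
  have l1 : |(|a| ^ (p - 2) * a - |b| ^ (p - 2) * b)| ≤ 2 * M ^ (p - 1) := by
    calc |(|a| ^ (p - 2) * a - |b| ^ (p - 2) * b)|
        ≤ |(|a| ^ (p - 2) * a)| + |(|b| ^ (p - 2) * b)| := abs_sub _ _
      _ = |a| ^ (p - 1) + |b| ^ (p - 1) := by rw [e a, e b]
      _ ≤ 2 * M ^ (p - 1) := by linarith
  have l2 : |a - b| ≤ 2 * M := by
    have h1 := le_max_left |a| |b|
    have h2 := le_max_right |a| |b|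
    calc |a - b| ≤ |a| + |b| := abs_sub _ _
      _ ≤ 2 * M := by linarith
  have lM : M ^ (p - 1) * M = M ^ p := by
    rw [rpow_mul_self' (p - 1) (by linarith) M hM0, show p - 1 + 1 = p by ring]
  have lMp : M ^ p ≤ |a| ^ p + |b| ^ p := by
    rcases max_cases |a| |b| with ⟨h1, _⟩ | ⟨h1, _⟩ <;> rw [hM, h1]
    · nlinarith [Real.rpow_nonneg (abs_nonneg b) p]
    · nlinarith [Real.rpow_nonneg (abs_nonneg a) p]
  calc |(|a| ^ (p - 2) * a - |b| ^ (p - 2) * b) * (a - b)|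
      = |(|a| ^ (p - 2) * a - |b| ^ (p - 2) * b)| * |a - b| := abs_mul _ _
    _ ≤ (2 * M ^ (p - 1)) * (2 * M) :=
        mul_le_mul l1 l2 (abs_nonneg _) (by positivity)
    _ = 4 * (M ^ (p - 1) * M) := by ring
    _ ≤ 4 * (|a| ^ p + |b| ^ p) := by rw [lM]; linarith

/-- The `L^r(μ)` norm of a real-valued function, `‖f‖_{L^r} = (∫ |f|^r dμ)^{1/r}`. -/
noncomputable def lpNorm {Ω : Type*} [MeasurableSpace Ω] (μ : Measure Ω) (r : ℝ)
    (f : Ω → ℝ) : ℝ :=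
  (∫ x, |f x| ^ r ∂μ) ^ (1 / r)

/-- On a measure space `(Ω, μ)`, for `p ≥ 2` and `u, v ∈ L^p(μ)`,
`∫ (|u|^{p-2}u − |v|^{p-2}v)(u − v) dμ ≥ 2^{-(p-2)} ‖u − v‖_{L^p(μ)}^p`. -/
theorem integrated_signedPower_coercivity {Ω : Type*} [MeasurableSpace Ω] (μ : Measure Ω)
    (p : ℝ) (hp : 2 ≤ p) (u v : Ω → ℝ)
    (hum : Measurable u) (hvm : Measurable v)
    (hu : Integrable (fun x => |u x| ^ p) μ)
    (hv : Integrable (fun x => |v x| ^ p) μ) :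
    (∫ x, (|u x| ^ (p - 2) * u x - |v x| ^ (p - 2) * v x) * (u x - v x) ∂μ) ≥
      (2 : ℝ) ^ (-(p - 2)) * lpNorm μ p (fun x => u x - v x) ^ p := by
  have hp0 : p ≠ 0 := by linarith
  have hc : (0:ℝ) ≤ (2:ℝ) ^ (-(p - 2)) := (Real.rpow_pos_of_pos two_pos _).le
  have hI : 0 ≤ ∫ x, |u x - v x| ^ p ∂μ :=
    integral_nonneg fun x => Real.rpow_nonneg (abs_nonneg _) _
  have hlp : lpNorm μ p (fun x => u x - v x) ^ p = ∫ x, |u x - v x| ^ p ∂μ := by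
    rw [_root_.lpNorm, ← Real.rpow_mul hI, one_div_mul_cancel hp0, Real.rpow_one]
  have hmeas : Measurable
      (fun x => (|u x| ^ (p - 2) * u x - |v x| ^ (p - 2) * v x) * (u x - v x)) := by
    have h1 : Measurable fun x => |u x| ^ (p - 2) :=
      (Real.continuous_rpow_const (by linarith)).measurable.comp hum.abs
    have h2 : Measurable fun x => |v x| ^ (p - 2) :=
      (Real.continuous_rpow_const (by linarith)).measurable.comp hvm.abs
    exact ((h1.mul hum).sub (h2.mul hvm)).mul (hum.sub hvm)
  have hint : Integrable
      (fun x => (|u x| ^ (p - 2) * u x - |v x| ^ (p - 2) * v x) * (u x - v x)) μ := by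
    refine Integrable.mono' ((hu.add hv).const_mul 4) hmeas.aestronglyMeasurable
      (Filter.Eventually.of_forall fun x => ?_)
    rw [Real.norm_eq_abs]
    exact f_abs_bound p hp (u x) (v x)
  rw [ge_iff_le, hlp, ← integral_const_mul]
  exact integral_mono_of_nonneg
    (Filter.Eventually.of_forall fun x =>
      mul_nonneg hc (Real.rpow_nonneg (abs_nonneg _) _))
    hint
    (Filter.Eventually.of_forall fun x => ptwise p hp (u x) (v x))
end

section
/- Let p be a real number with p ≥ 2. Then for all real numbers a and b, ||a|^{p-2}a − |b|^{p-2}b| ≤ (p − 1)|a − b|(|a| + |b|)^{p-2}. -/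
open Filter Set Topology

lemma signedPower_hasDerivAt (p : ℝ) (hp : 2 ≤ p) (t : ℝ) :
    HasDerivAt (fun x : ℝ => |x| ^ (p - 2) * x) ((p - 1) * |t| ^ (p - 2)) t := by
  rcases eq_or_ne t 0 with rfl | ht
  · rcases eq_or_lt_of_le hp with hp2 | hp2
    · -- p = 2
      have hps : p - 2 = 0 := by rw [← hp2]; ring
      have hfun : (fun x : ℝ => |x| ^ (p - 2) * x) = fun x => x := by
        funext x; rw [hps, Real.rpow_zero, one_mul]
      have : (p - 1) * |(0:ℝ)| ^ (p - 2) = 1 := by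
        rw [hps, Real.rpow_zero, ← hp2]; ring
      rw [hfun, this]
      exact hasDerivAt_id 0
    · -- 2 < p
      have hps : (0:ℝ) < p - 2 := by linarith
      have h0 : (p - 1) * |(0:ℝ)| ^ (p - 2) = 0 := by
        simp [Real.zero_rpow (ne_of_gt hps)]
      rw [h0, hasDerivAt_iff_tendsto_slope]
      have heq : ∀ x ∈ ({(0:ℝ)}ᶜ : Set ℝ),
          slope (fun x : ℝ => |x| ^ (p - 2) * x) 0 x = |x| ^ (p - 2) := by
        intro x hx
        have hx0 : x ≠ 0 := hx
        rw [slope_def_field]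
        field_simp
        ring
      have hcont : Tendsto (fun x : ℝ => |x| ^ (p - 2)) (𝓝[≠] 0) (𝓝 0) := by
        have : Tendsto (fun x : ℝ => |x| ^ (p - 2)) (𝓝 0) (𝓝 (|(0:ℝ)| ^ (p - 2))) := by
          apply ContinuousAt.tendsto
          exact (Real.continuousAt_rpow_const _ _ (Or.inr (le_of_lt hps))).comp
            continuous_abs.continuousAt
        have h00 : |(0:ℝ)| ^ (p - 2) = 0 := by simp [Real.zero_rpow (ne_of_gt hps)]
        rw [h00] at this
        exact this.mono_left nhdsWithin_le_nhds
      exact hcont.congr' (by filter_upwards [self_mem_nhdsWithin] with x hx using (heq x hx).symm)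
  · have habs : HasDerivAt (fun x : ℝ => |x|) ((SignType.sign t : ℝ)) t := hasDerivAt_abs ht
    have hat : |t| ≠ 0 := abs_ne_zero.mpr ht
    have hrpow : HasDerivAt (fun y : ℝ => y ^ (p - 2)) ((p - 2) * |t| ^ (p - 2 - 1)) |t| :=
      Real.hasDerivAt_rpow_const (Or.inl hat)
    have hcomp : HasDerivAt (fun x : ℝ => |x| ^ (p - 2))
        ((p - 2) * |t| ^ (p - 2 - 1) * (SignType.sign t : ℝ)) t := hrpow.comp t habs
    have hmul := hcomp.mul (hasDerivAt_id t)
    refine hmul.congr_deriv ?_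
    symm
    have hsign : (SignType.sign t : ℝ) * t = |t| := by
      rcases lt_or_gt_of_ne ht with h | h
      · simp [sign_neg h, abs_of_neg h]
      · simp [sign_pos h, abs_of_pos h]
    have hpos : (0:ℝ) < |t| := abs_pos.mpr ht
    have hstep : |t| ^ (p - 2 - 1) * |t| = |t| ^ (p - 2) := by
      nth_rewrite 2 [show |t| = |t| ^ (1:ℝ) from (Real.rpow_one _).symm]
      rw [← Real.rpow_add hpos]
      norm_num
    calc (p - 1) * |t| ^ (p - 2)
        = (p - 2) * |t| ^ (p - 2) + |t| ^ (p - 2) := by ring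
      _ = (p - 2) * (|t| ^ (p - 2 - 1) * |t|) + |t| ^ (p - 2) := by rw [hstep]
      _ = (p - 2) * |t| ^ (p - 2 - 1) * (SignType.sign t : ℝ) * t + |t| ^ (p - 2) * 1 := by
          rw [mul_one]; rw [mul_assoc ((p-2) * |t| ^ (p - 2 - 1))]; rw [hsign]; ring
      _ = _ := by simp only [id_eq]

/-- For `p ≥ 2` and all real `a, b`,
`||a|^{p-2}a − |b|^{p-2}b| ≤ (p − 1)|a − b|(|a| + |b|)^{p-2}`,
where the powers are real (rpow) powers (so `0^0 = 1` when `p = 2`). -/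
theorem signedPower_lipschitz (p : ℝ) (hp : 2 ≤ p) (a b : ℝ) :
    |(|a| ^ (p - 2) * a - |b| ^ (p - 2) * b)| ≤ (p - 1) * |a - b| * (|a| + |b|) ^ (p - 2) := by
  set C : ℝ := (p - 1) * (|a| + |b|) ^ (p - 2) with hC
  set s : Set ℝ := segment ℝ b a with hs
  have hderiv : ∀ t ∈ s, HasDerivWithinAt (fun x : ℝ => |x| ^ (p - 2) * x)
      ((p - 1) * |t| ^ (p - 2)) s t :=
    fun t _ => (signedPower_hasDerivAt p hp t).hasDerivWithinAt
  have hbound : ∀ t ∈ s, ‖(p - 1) * |t| ^ (p - 2)‖ ≤ C := by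
    intro t hts
    have htabs : |t| ≤ |a| + |b| := by
      rw [hs, segment_eq_uIcc] at hts
      rcases Set.mem_uIcc.mp hts with ⟨h1, h2⟩ | ⟨h1, h2⟩ <;>
        refine le_trans (abs_le_max_abs_abs h1 h2) (max_le ?_ ?_) <;>
        linarith [abs_nonneg a, abs_nonneg b]
    have h1 : |t| ^ (p - 2) ≤ (|a| + |b|) ^ (p - 2) :=
      Real.rpow_le_rpow (abs_nonneg t) htabs (by linarith)
    have hp1 : (0:ℝ) ≤ p - 1 := by linarith
    have hnn : (0:ℝ) ≤ (p - 1) * |t| ^ (p - 2) :=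
      mul_nonneg hp1 (Real.rpow_nonneg (abs_nonneg t) _)
    rw [Real.norm_eq_abs, abs_of_nonneg hnn]
    exact mul_le_mul_of_nonneg_left h1 hp1
  have := (convex_segment b a).norm_image_sub_le_of_norm_hasDerivWithin_le hderiv hbound
    (left_mem_segment ℝ b a) (right_mem_segment ℝ b a)
  -- this : ‖f b - f a‖ ≤ C * ‖b - a‖  (check orientation)
  rw [Real.norm_eq_abs, Real.norm_eq_abs] at this
  calc |(|a| ^ (p - 2) * a - |b| ^ (p - 2) * b)| ≤ C * |a - b| := by
        have : |(|a| ^ (p - 2) * a - |b| ^ (p - 2) * b)| ≤ C * |a - b| := this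
        exact this
    _ = (p - 1) * |a - b| * (|a| + |b|) ^ (p - 2) := by rw [hC]; ring
end

section
/- Let (Ω, μ) be a measure space, p a real number with p ≥ 2, and u, v ∈ L^{2p-2}(μ) real-valued. Then |u|^{p-2}u belongs to L^2(μ) with ‖|u|^{p-2}u‖_{L^2(μ)} = ‖u‖_{L^{2p-2}(μ)}^{p-1}, and ‖|u|^{p-2}u − |v|^{p-2}v‖_{L^2(μ)} ≤ (p − 1)(‖u‖_{L^{2p-2}(μ)} + ‖v‖_{L^{2p-2}(μ)})^{p-2} ‖u − v‖_{L^{2p-2}(μ)}. In particular, the map u ↦ −|u|^{p-2}u is Lipschitz on balls from L^{2p-2}(μ) to L^2(μ). -/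
open MeasureTheory

section Aux

lemma sp_real_add_rpow_le {a b q : ℝ} (ha : 0 ≤ a) (hb : 0 ≤ b) (hq : 1 ≤ q) :
    a ^ q + b ^ q ≤ (a + b) ^ q := by
  have h := NNReal.coe_le_coe.2 (NNReal.add_rpow_le_rpow_add a.toNNReal b.toNNReal hq)
  push_cast at h
  rwa [Real.coe_toNNReal a ha, Real.coe_toNNReal b hb] at h

lemma sp_rpow_sub_le {q a b : ℝ} (hq : 1 ≤ q) (hb : 0 ≤ b) (hba : b ≤ a) :
    a ^ q - b ^ q ≤ q * a ^ (q - 1) * (a - b) := by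
  rcases eq_or_lt_of_le (hb.trans hba) with ha | ha
  · have hb0 : b = 0 := le_antisymm (by linarith) hb
    rw [hb0, ← ha]
    simp [Real.zero_rpow (show q ≠ 0 by linarith)]
  · have haq : (0:ℝ) < a ^ q := Real.rpow_pos_of_pos ha q
    set t := b / a with htdef
    have ht0 : 0 ≤ t := div_nonneg hb ha.le
    have ht1 : t ≤ 1 := (div_le_one ha).2 hba
    have hber := one_add_mul_self_le_rpow_one_add (by linarith : (-1:ℝ) ≤ t - 1) hq
    rw [show (1:ℝ) + (t - 1) = t by ring] at hber
    have h1 : 1 - t ^ q ≤ q * (1 - t) := by linarith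
    have h3 : a ^ q * t ^ q = b ^ q := by
      rw [htdef, Real.div_rpow hb ha.le]
      field_simp
    have haq1 : a ^ q = a ^ (q - 1) * a := by
      rw [← Real.rpow_add_one ha.ne' (q - 1)]
      ring_nf
    have h4 : a ^ q * (1 - t) = a ^ (q - 1) * (a - b) := by
      rw [htdef, haq1]
      field_simp
    calc a ^ q - b ^ q = a ^ q * (1 - t ^ q) := by rw [mul_sub, mul_one, h3]
      _ ≤ a ^ q * (q * (1 - t)) := mul_le_mul_of_nonneg_left h1 haq.le
      _ = q * (a ^ q * (1 - t)) := by ring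
      _ = q * a ^ (q - 1) * (a - b) := by rw [h4]; ring

lemma sp_rpow_mul_self {p : ℝ} (hp : 2 ≤ p) {c : ℝ} (hc : 0 ≤ c) :
    c ^ (p - 2) * c = c ^ (p - 1) := by
  rcases eq_or_lt_of_le hc with h | h
  · rw [← h]
    simp [Real.zero_rpow (show p - 1 ≠ 0 by linarith)]
  · rw [show p - 1 = (p - 2) + 1 by ring, Real.rpow_add_one h.ne']

lemma sp_key0 {p : ℝ} (hp : 2 ≤ p) {a b : ℝ} (ha : 0 ≤ a) (hba : |b| ≤ a) :
    |(|a| ^ (p - 2) * a - |b| ^ (p - 2) * b)| ≤ (p - 1) * (|a| + |b|) ^ (p - 2) * |a - b| := by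
  rw [abs_of_nonneg ha]
  rcases le_or_gt 0 b with hb | hb
  · rw [abs_of_nonneg hb, sp_rpow_mul_self hp ha, sp_rpow_mul_self hp hb]
    have hba' : b ≤ a := by rwa [abs_of_nonneg hb] at hba
    have hmono : b ^ (p - 1) ≤ a ^ (p - 1) := Real.rpow_le_rpow hb hba' (by linarith)
    rw [abs_of_nonneg (sub_nonneg.2 hmono), abs_of_nonneg (sub_nonneg.2 hba')]
    have h1 : a ^ (p - 1) - b ^ (p - 1) ≤ (p - 1) * a ^ (p - 2) * (a - b) := by
      have := sp_rpow_sub_le (q := p - 1) (by linarith) hb hba'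
      rwa [show p - 1 - 1 = p - 2 by ring] at this
    have h2 : a ^ (p - 2) ≤ (a + b) ^ (p - 2) :=
      Real.rpow_le_rpow ha (by linarith) (by linarith)
    calc a ^ (p - 1) - b ^ (p - 1) ≤ (p - 1) * a ^ (p - 2) * (a - b) := h1
      _ ≤ (p - 1) * (a + b) ^ (p - 2) * (a - b) := by
          apply mul_le_mul_of_nonneg_right _ (by linarith)
          exact mul_le_mul_of_nonneg_left h2 (by linarith)
  · rw [abs_of_neg hb]
    have hc0 : (0:ℝ) < -b := by linarith
    have hba' : -b ≤ a := by rwa [abs_of_neg hb] at hba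
    have he : a ^ (p - 2) * a - (-b) ^ (p - 2) * b = a ^ (p - 1) + (-b) ^ (p - 1) := by
      rw [sp_rpow_mul_self hp ha, ← sp_rpow_mul_self hp hc0.le]; ring
    rw [he, abs_of_nonneg (by positivity), abs_of_nonneg (by linarith : (0:ℝ) ≤ a - b)]
    have hac : (0:ℝ) < a + -b := by linarith
    calc a ^ (p - 1) + (-b) ^ (p - 1) ≤ (a + -b) ^ (p - 1) :=
          sp_real_add_rpow_le ha hc0.le (by linarith)
      _ = (a + -b) ^ (p - 2) * (a + -b) := by
          rw [show p - 1 = (p - 2) + 1 by ring, Real.rpow_add_one hac.ne']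
      _ ≤ (p - 1) * ((a + -b) ^ (p - 2) * (a + -b)) :=
          le_mul_of_one_le_left (by positivity) (by linarith)
      _ = (p - 1) * (a + -b) ^ (p - 2) * (a - b) := by ring

lemma sp_key {p : ℝ} (hp : 2 ≤ p) (a b : ℝ) :
    |(|a| ^ (p - 2) * a - |b| ^ (p - 2) * b)| ≤ (p - 1) * (|a| + |b|) ^ (p - 2) * |a - b| := by
  have main : ∀ a b : ℝ, |b| ≤ |a| →
      |(|a| ^ (p - 2) * a - |b| ^ (p - 2) * b)| ≤ (p - 1) * (|a| + |b|) ^ (p - 2) * |a - b| := by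
    intro a b hba
    rcases le_or_gt 0 a with ha | ha
    · exact sp_key0 hp ha (by rwa [abs_of_nonneg ha] at hba)
    · have h := sp_key0 (p := p) hp (a := -a) (b := -b) (by linarith)
        (by rw [abs_neg]; rwa [abs_of_neg ha] at hba)
      rw [abs_neg a, abs_neg b,
        show |a| ^ (p - 2) * (-a) - |b| ^ (p - 2) * (-b)
          = -(|a| ^ (p - 2) * a - |b| ^ (p - 2) * b) by ring, abs_neg,
        show -a - -b = -(a - b) by ring, abs_neg] at h
      exact h
  rcases le_total |b| |a| with h | h
  · exact main a b h
  · have h2 := main b a h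
    rw [abs_sub_comm (|a| ^ (p - 2) * a), abs_sub_comm a b, add_comm (|a|)]
    exact h2

end Aux

/-- For `p ≥ 2` and `u, v ∈ L^{2p-2}(μ)`, the function `|u|^{p-2}u`
belongs to `L^2(μ)` with `‖|u|^{p-2}u‖_{L^2} = ‖u‖_{L^{2p-2}}^{p-1}`, and
`‖|u|^{p-2}u − |v|^{p-2}v‖_{L^2} ≤ (p−1)(‖u‖_{L^{2p-2}} + ‖v‖_{L^{2p-2}})^{p-2} ‖u−v‖_{L^{2p-2}}`;
in particular `u ↦ −|u|^{p-2}u` is Lipschitz on balls from `L^{2p-2}(μ)` to `L^2(μ)`. -/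
theorem signedPower_lipschitz_on_balls {Ω : Type*} [MeasurableSpace Ω] (μ : Measure Ω)
    (p : ℝ) (hp : 2 ≤ p) (u v : Ω → ℝ)
    (hum : Measurable u) (hvm : Measurable v)
    (hu : Integrable (fun x => |u x| ^ (2 * p - 2)) μ)
    (hv : Integrable (fun x => |v x| ^ (2 * p - 2)) μ) :
    Integrable (fun x => |(|u x| ^ (p - 2) * u x)| ^ (2 : ℝ)) μ ∧
      lpNorm μ 2 (fun x => |u x| ^ (p - 2) * u x) = lpNorm μ (2 * p - 2) u ^ (p - 1) ∧
      lpNorm μ 2 (fun x => |u x| ^ (p - 2) * u x - |v x| ^ (p - 2) * v x) ≤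
        (p - 1) * (lpNorm μ (2 * p - 2) u + lpNorm μ (2 * p - 2) v) ^ (p - 2) *
          lpNorm μ (2 * p - 2) (fun x => u x - v x) := by
  classical
  have hp1 : (1:ℝ) ≤ p - 1 := by linarith
  set q : ℝ := 2 * p - 2 with hqdef
  have hq0 : (0:ℝ) < q := by rw [hqdef]; linarith
  have hq1 : (1:ℝ) ≤ q := by rw [hqdef]; linarith
  have habs : ∀ x : ℝ, |(|x| ^ (p - 2) * x)| = |x| ^ (p - 1) := fun x => by
    rw [abs_mul, abs_of_nonneg (Real.rpow_nonneg (abs_nonneg x) _),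
      sp_rpow_mul_self hp (abs_nonneg x)]
  have hsq : ∀ x : ℝ, |(|x| ^ (p - 2) * x)| ^ (2:ℝ) = |x| ^ q := fun x => by
    rw [habs x, ← Real.rpow_mul (abs_nonneg x)]
    congr 1
    rw [hqdef]; ring
  have hmu : Measurable fun x => |u x| ^ (p - 2) * u x := (hum.abs.pow_const _).mul hum
  have hmv : Measurable fun x => |v x| ^ (p - 2) * v x := (hvm.abs.pow_const _).mul hvm
  have hmw : Measurable fun x => u x - v x := hum.sub hvm
  have hIntU : Integrable (fun x => |(|u x| ^ (p - 2) * u x)| ^ (2 : ℝ)) μ :=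
    hu.congr (Filter.Eventually.of_forall fun x => (hsq (u x)).symm)
  -- generic conversions between lpNorm and lintegrals
  have iffInt : ∀ (r : ℝ), 0 < r → ∀ f : Ω → ℝ, Measurable f →
      (Integrable (fun x => |f x| ^ r) μ ↔
        (∫⁻ x, (ENNReal.ofReal |f x|) ^ r ∂μ) ≠ ⊤) := by
    intro r hr f hf
    rw [show (∫⁻ x, (ENNReal.ofReal |f x|) ^ r ∂μ) = ∫⁻ x, ENNReal.ofReal (|f x| ^ r) ∂μ from
        lintegral_congr fun x => (ENNReal.ofReal_rpow_of_nonneg (abs_nonneg _) hr.le),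
      lintegral_ofReal_ne_top_iff_integrable ((hf.abs.pow_const r).aestronglyMeasurable)
        (Filter.Eventually.of_forall fun x => Real.rpow_nonneg (abs_nonneg _) r)]
  have conv : ∀ (r : ℝ), 0 < r → ∀ f : Ω → ℝ, Measurable f →
      Integrable (fun x => |f x| ^ r) μ →
      lpNorm μ r f = ((∫⁻ x, (ENNReal.ofReal |f x|) ^ r ∂μ) ^ (1/r)).toReal := by
    intro r hr f hf hint
    simp only [_root_.lpNorm]
    rw [integral_eq_lintegral_of_nonneg_ae
        (Filter.Eventually.of_forall fun x => Real.rpow_nonneg (abs_nonneg _) r)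
        ((hf.abs.pow_const r).aestronglyMeasurable), ← ENNReal.toReal_rpow]
    congr 2
    exact lintegral_congr fun x => (ENNReal.ofReal_rpow_of_nonneg (abs_nonneg _) hr.le).symm
  have hAne : (∫⁻ x, (ENNReal.ofReal |u x|) ^ q ∂μ) ≠ ⊤ := (iffInt q hq0 u hum).1 hu
  have hBne : (∫⁻ x, (ENNReal.ofReal |v x|) ^ q ∂μ) ≠ ⊤ := (iffInt q hq0 v hvm).1 hv
  refine ⟨hIntU, ?_, ?_⟩
  · rw [conv 2 (by norm_num) _ hmu hIntU, conv q hq0 u hum hu]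
    rw [show (∫⁻ x, (ENNReal.ofReal |(|u x| ^ (p - 2) * u x)|) ^ (2:ℝ) ∂μ)
        = ∫⁻ x, (ENNReal.ofReal |u x|) ^ q ∂μ from lintegral_congr fun x => by
      rw [habs (u x), ← ENNReal.ofReal_rpow_of_nonneg (abs_nonneg _) (by linarith : (0:ℝ) ≤ p - 1),
        ← ENNReal.rpow_mul]
      congr 1
      rw [hqdef]; ring]
    rw [ENNReal.toReal_rpow]
    congr 1
    rw [← ENNReal.rpow_mul]
    congr 1
    rw [hqdef]
    have h2 : 2 * p - 2 ≠ 0 := by linarith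
    field_simp
  · rcases eq_or_lt_of_le hp with hp2 | hp2
    · have hq2 : q = 2 := by rw [hqdef, ← hp2]; norm_num
      rw [hq2, ← hp2]
      norm_num [Real.rpow_zero]
    · -- 2 < p
      have hp21 : p - 1 ≠ 0 := by linarith
      have hp22 : p - 2 ≠ 0 := by linarith
      have two0 : (0:ℝ) ≤ 2 := by norm_num
      -- Minkowski
      have hUV : (∫⁻ x, (ENNReal.ofReal |u x| + ENNReal.ofReal |v x|) ^ q ∂μ) ≤
          ((∫⁻ x, (ENNReal.ofReal |u x|) ^ q ∂μ) ^ (1/q)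
            + (∫⁻ x, (ENNReal.ofReal |v x|) ^ q ∂μ) ^ (1/q)) ^ q := by
        have hMink := ENNReal.lintegral_Lp_add_le (μ := μ)
          (hum.abs.ennreal_ofReal.aemeasurable) (hvm.abs.ennreal_ofReal.aemeasurable) hq1
        calc (∫⁻ x, (ENNReal.ofReal |u x| + ENNReal.ofReal |v x|) ^ q ∂μ)
            = ((∫⁻ x, (ENNReal.ofReal |u x| + ENNReal.ofReal |v x|) ^ q ∂μ) ^ (1/q)) ^ q := by
              rw [← ENNReal.rpow_mul, one_div, inv_mul_cancel₀ hq0.ne', ENNReal.rpow_one]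
          _ ≤ _ := ENNReal.rpow_le_rpow hMink hq0.le
      have hNUne : (∫⁻ x, (ENNReal.ofReal |u x|) ^ q ∂μ) ^ (1/q) ≠ ⊤ :=
        ENNReal.rpow_ne_top_of_nonneg (by positivity) hAne
      have hNVne : (∫⁻ x, (ENNReal.ofReal |v x|) ^ q ∂μ) ^ (1/q) ≠ ⊤ :=
        ENNReal.rpow_ne_top_of_nonneg (by positivity) hBne
      have hNUVne : (∫⁻ x, (ENNReal.ofReal |u x|) ^ q ∂μ) ^ (1/q)
          + (∫⁻ x, (ENNReal.ofReal |v x|) ^ q ∂μ) ^ (1/q) ≠ ⊤ :=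
        ENNReal.add_ne_top.2 ⟨hNUne, hNVne⟩
      have hWle : ∀ x, ENNReal.ofReal |u x - v x|
          ≤ ENNReal.ofReal |u x| + ENNReal.ofReal |v x| := fun x => by
        rw [← ENNReal.ofReal_add (abs_nonneg _) (abs_nonneg _)]
        exact ENNReal.ofReal_le_ofReal (abs_sub (u x) (v x))
      have hWq_le : (∫⁻ x, (ENNReal.ofReal |u x - v x|) ^ q ∂μ) ≤
          ((∫⁻ x, (ENNReal.ofReal |u x|) ^ q ∂μ) ^ (1/q)
            + (∫⁻ x, (ENNReal.ofReal |v x|) ^ q ∂μ) ^ (1/q)) ^ q :=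
        le_trans (lintegral_mono fun x => ENNReal.rpow_le_rpow (hWle x) hq0.le) hUV
      have hWqne : (∫⁻ x, (ENNReal.ofReal |u x - v x|) ^ q ∂μ) ≠ ⊤ :=
        ne_top_of_le_ne_top (ENNReal.rpow_ne_top_of_nonneg hq0.le hNUVne) hWq_le
      have hIntW : Integrable (fun x => |u x - v x| ^ q) μ := (iffInt q hq0 _ hmw).2 hWqne
      -- pointwise bound
      have hpt : ∀ x, (ENNReal.ofReal |(|u x| ^ (p - 2) * u x - |v x| ^ (p - 2) * v x)|) ^ (2:ℝ)
          ≤ (ENNReal.ofReal (p-1)) ^ (2:ℝ) *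
            (((ENNReal.ofReal |u x| + ENNReal.ofReal |v x|) ^ (2*p - 4)) *
              (ENNReal.ofReal |u x - v x|) ^ (2:ℝ)) := by
        intro x
        have h1 : ENNReal.ofReal |(|u x| ^ (p - 2) * u x - |v x| ^ (p - 2) * v x)|
            ≤ ENNReal.ofReal ((p-1) * (|u x| + |v x|) ^ (p-2) * |u x - v x|) :=
          ENNReal.ofReal_le_ofReal (sp_key hp (u x) (v x))
        have h2 : ENNReal.ofReal ((p-1) * (|u x| + |v x|) ^ (p-2) * |u x - v x|)
            = ENNReal.ofReal (p-1) * (ENNReal.ofReal |u x| + ENNReal.ofReal |v x|) ^ (p-2)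
              * ENNReal.ofReal |u x - v x| := by
          rw [ENNReal.ofReal_mul (by positivity), ENNReal.ofReal_mul (by linarith : (0:ℝ) ≤ p - 1),
            ← ENNReal.ofReal_rpow_of_nonneg (by positivity) (by linarith : (0:ℝ) ≤ p - 2),
            ENNReal.ofReal_add (abs_nonneg _) (abs_nonneg _)]
        calc (ENNReal.ofReal |(|u x| ^ (p - 2) * u x - |v x| ^ (p - 2) * v x)|) ^ (2:ℝ)
            ≤ (ENNReal.ofReal (p-1) * (ENNReal.ofReal |u x| + ENNReal.ofReal |v x|) ^ (p-2)
              * ENNReal.ofReal |u x - v x|) ^ (2:ℝ) :=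
              ENNReal.rpow_le_rpow (h1.trans_eq h2) two0
          _ = _ := by
              rw [ENNReal.mul_rpow_of_nonneg _ _ two0, ENNReal.mul_rpow_of_nonneg _ _ two0,
                ← ENNReal.rpow_mul, show (p-2) * (2:ℝ) = 2*p - 4 by ring, mul_assoc]
      -- Hoelder
      have hconj : Real.HolderConjugate ((p-1)/(p-2)) (p-1) := by
        rw [Real.holderConjugate_iff]
        constructor
        · rw [lt_div_iff₀ (by linarith)]; linarith
        · rw [inv_div]
          field_simp
          ring
      have hHolder := ENNReal.lintegral_mul_le_Lp_mul_Lq μ hconj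
        (((hum.abs.ennreal_ofReal.add hvm.abs.ennreal_ofReal).pow_const _).aemeasurable :
          AEMeasurable (fun x => (ENNReal.ofReal |u x| + ENNReal.ofReal |v x|) ^ (2*p - 4)) μ)
        ((hmw.abs.ennreal_ofReal.pow_const _).aemeasurable :
          AEMeasurable (fun x => (ENNReal.ofReal |u x - v x|) ^ (2:ℝ)) μ)
      simp only [Pi.mul_apply, Pi.add_apply] at hHolder
      rw [show (∫⁻ x, ((ENNReal.ofReal |u x| + ENNReal.ofReal |v x|) ^ (2*p-4)) ^ ((p-1)/(p-2)) ∂μ)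
          = ∫⁻ x, (ENNReal.ofReal |u x| + ENNReal.ofReal |v x|) ^ q ∂μ from
          lintegral_congr fun x => by
            rw [← ENNReal.rpow_mul]
            congr 1
            rw [hqdef]; field_simp; ring,
        show (∫⁻ x, ((ENNReal.ofReal |u x - v x|) ^ (2:ℝ)) ^ (p-1) ∂μ)
          = ∫⁻ x, (ENNReal.ofReal |u x - v x|) ^ q ∂μ from
          lintegral_congr fun x => by
            rw [← ENNReal.rpow_mul]
            congr 1
            rw [hqdef]; ring] at hHolder
      -- main chain
      have hchain : (∫⁻ x,
            (ENNReal.ofReal |(|u x| ^ (p - 2) * u x - |v x| ^ (p - 2) * v x)|) ^ (2:ℝ) ∂μ)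
          ≤ (ENNReal.ofReal (p-1) *
              (((∫⁻ x, (ENNReal.ofReal |u x|) ^ q ∂μ) ^ (1/q)
                + (∫⁻ x, (ENNReal.ofReal |v x|) ^ q ∂μ) ^ (1/q)) ^ (p-2) *
               (∫⁻ x, (ENNReal.ofReal |u x - v x|) ^ q ∂μ) ^ (1/q))) ^ (2:ℝ) := by
        calc (∫⁻ x,
            (ENNReal.ofReal |(|u x| ^ (p - 2) * u x - |v x| ^ (p - 2) * v x)|) ^ (2:ℝ) ∂μ)
            ≤ ∫⁻ x, (ENNReal.ofReal (p-1)) ^ (2:ℝ) *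
                (((ENNReal.ofReal |u x| + ENNReal.ofReal |v x|) ^ (2*p - 4)) *
                  (ENNReal.ofReal |u x - v x|) ^ (2:ℝ)) ∂μ := lintegral_mono hpt
          _ = (ENNReal.ofReal (p-1)) ^ (2:ℝ) *
              ∫⁻ x, ((ENNReal.ofReal |u x| + ENNReal.ofReal |v x|) ^ (2*p - 4)) *
                  (ENNReal.ofReal |u x - v x|) ^ (2:ℝ) ∂μ :=
              lintegral_const_mul' _ _ (ENNReal.rpow_ne_top_of_nonneg two0 ENNReal.ofReal_ne_top)
          _ ≤ (ENNReal.ofReal (p-1)) ^ (2:ℝ) *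
              ((∫⁻ x, (ENNReal.ofReal |u x| + ENNReal.ofReal |v x|) ^ q ∂μ) ^ (1/((p-1)/(p-2))) *
               (∫⁻ x, (ENNReal.ofReal |u x - v x|) ^ q ∂μ) ^ (1/(p-1))) :=
              mul_le_mul_right hHolder _
          _ ≤ (ENNReal.ofReal (p-1)) ^ (2:ℝ) *
              ((((∫⁻ x, (ENNReal.ofReal |u x|) ^ q ∂μ) ^ (1/q)
                + (∫⁻ x, (ENNReal.ofReal |v x|) ^ q ∂μ) ^ (1/q)) ^ q) ^ (1/((p-1)/(p-2))) *
               (∫⁻ x, (ENNReal.ofReal |u x - v x|) ^ q ∂μ) ^ (1/(p-1))) := by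
              refine mul_le_mul_right (mul_le_mul_left (ENNReal.rpow_le_rpow hUV ?_) _) _
              rw [one_div, inv_div]
              exact div_nonneg (by linarith) (by linarith)
          _ = _ := by
              rw [ENNReal.mul_rpow_of_nonneg _ _ two0, ENNReal.mul_rpow_of_nonneg _ _ two0,
                ← ENNReal.rpow_mul, ← ENNReal.rpow_mul, ← ENNReal.rpow_mul,
                show (p-2) * (2:ℝ) = q * (1/((p-1)/(p-2))) by rw [hqdef]; field_simp,
                show (1:ℝ)/q * 2 = 1/(p-1) by rw [hqdef]; field_simp]
      have hRHSne : ENNReal.ofReal (p-1) *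
          (((∫⁻ x, (ENNReal.ofReal |u x|) ^ q ∂μ) ^ (1/q)
            + (∫⁻ x, (ENNReal.ofReal |v x|) ^ q ∂μ) ^ (1/q)) ^ (p-2) *
           (∫⁻ x, (ENNReal.ofReal |u x - v x|) ^ q ∂μ) ^ (1/q)) ≠ ⊤ :=
        ENNReal.mul_ne_top ENNReal.ofReal_ne_top
          (ENNReal.mul_ne_top
            (ENNReal.rpow_ne_top_of_nonneg (by linarith) hNUVne)
            (ENNReal.rpow_ne_top_of_nonneg (by positivity) hWqne))
      have hD2ne : (∫⁻ x,
          (ENNReal.ofReal |(|u x| ^ (p - 2) * u x - |v x| ^ (p - 2) * v x)|) ^ (2:ℝ) ∂μ) ≠ ⊤ :=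
        ne_top_of_le_ne_top (ENNReal.rpow_ne_top_of_nonneg two0 hRHSne) hchain
      have hIntD : Integrable
          (fun x => |(|u x| ^ (p - 2) * u x - |v x| ^ (p - 2) * v x)| ^ (2:ℝ)) μ :=
        (iffInt 2 (by norm_num) _ (hmu.sub hmv)).2 hD2ne
      have hfinal : (∫⁻ x,
            (ENNReal.ofReal |(|u x| ^ (p - 2) * u x - |v x| ^ (p - 2) * v x)|) ^ (2:ℝ) ∂μ) ^ (1/2 : ℝ)
          ≤ ENNReal.ofReal (p-1) *
              (((∫⁻ x, (ENNReal.ofReal |u x|) ^ q ∂μ) ^ (1/q)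
                + (∫⁻ x, (ENNReal.ofReal |v x|) ^ q ∂μ) ^ (1/q)) ^ (p-2) *
               (∫⁻ x, (ENNReal.ofReal |u x - v x|) ^ q ∂μ) ^ (1/q)) := by
        have h := ENNReal.rpow_le_rpow hchain (by norm_num : (0:ℝ) ≤ 1/2)
        rwa [← ENNReal.rpow_mul, show (2:ℝ) * (1/2) = 1 by norm_num, ENNReal.rpow_one] at h
      rw [conv 2 (by norm_num) (fun x => |u x| ^ (p - 2) * u x - |v x| ^ (p - 2) * v x) (hmu.sub hmv) hIntD, conv q hq0 u hum hu, conv q hq0 v hvm hv,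
        conv q hq0 _ hmw hIntW]
      rw [show (p - 1) * (((∫⁻ x, (ENNReal.ofReal |u x|) ^ q ∂μ) ^ (1/q)).toReal
            + ((∫⁻ x, (ENNReal.ofReal |v x|) ^ q ∂μ) ^ (1/q)).toReal) ^ (p-2) *
           ((∫⁻ x, (ENNReal.ofReal |u x - v x|) ^ q ∂μ) ^ (1/q)).toReal
          = (ENNReal.ofReal (p-1) *
              (((∫⁻ x, (ENNReal.ofReal |u x|) ^ q ∂μ) ^ (1/q)
                + (∫⁻ x, (ENNReal.ofReal |v x|) ^ q ∂μ) ^ (1/q)) ^ (p-2) *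
               (∫⁻ x, (ENNReal.ofReal |u x - v x|) ^ q ∂μ) ^ (1/q))).toReal from by
        rw [ENNReal.toReal_mul, ENNReal.toReal_mul,
          ← ENNReal.toReal_rpow ((∫⁻ x, (ENNReal.ofReal |u x|) ^ q ∂μ) ^ (1/q)
            + (∫⁻ x, (ENNReal.ofReal |v x|) ^ q ∂μ) ^ (1/q)) (p-2),
          ENNReal.toReal_add hNUne hNVne, ENNReal.toReal_ofReal (by linarith : (0:ℝ) ≤ p - 1)]
        ring]
      exact ENNReal.toReal_mono hRHSne hfinal
end

section
/- Let (Ω, μ) be a finite measure space, p a real number with p ≥ 2, and u, v ∈ L^{2p-2}(μ) real-valued. Then u and v belong to L^p(μ) ∩ L^2(μ), the functions ‖u‖_{L^p(μ)}^p·u and ‖v‖_{L^p(μ)}^p·v belong to L^2(μ), and ‖ ‖u‖_{L^p(μ)}^p u − ‖v‖_{L^p(μ)}^p v ‖_{L^2(μ)} ≤ ‖u‖_{L^p(μ)}^p ‖u − v‖_{L^2(μ)} + p(‖u‖_{L^p(μ)} + ‖v‖_{L^p(μ)})^{p-1} ‖u − v‖_{L^p(μ)} ‖v‖_{L^2(μ)}.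 In particular, the map u ↦ ‖u‖_{L^p(μ)}^p u is Lipschitz on balls from L^{2p-2}(μ) to L^2(μ). -/
open MeasureTheory ENNReal

private lemma abs_rpow_sub_rpow_le {p : ℝ} (hp : 1 ≤ p) {a b : ℝ} (ha : 0 ≤ a) (hb : 0 ≤ b) :
    |a ^ p - b ^ p| ≤ p * (a + b) ^ (p - 1) * |a - b| := by
  wlog hab : b ≤ a generalizing a b
  · rw [abs_sub_comm, abs_sub_comm a b, add_comm]
    exact this hb ha (le_of_not_ge hab)
  have hp0 : (0 : ℝ) ≤ p := by linarith
  have hderiv : ∀ x ∈ Set.Icc b a,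
      HasDerivWithinAt (fun y : ℝ => y ^ p) ((fun x : ℝ => p * x ^ (p - 1)) x)
        (Set.Icc b a) x :=
    fun x _ => (Real.hasDerivAt_rpow_const (Or.inr hp)).hasDerivWithinAt
  have hbound : ∀ x ∈ Set.Icc b a, ‖p * x ^ (p - 1)‖ ≤ p * (a + b) ^ (p - 1) := by
    intro x hx
    have hx0 : 0 ≤ x := le_trans hb hx.1
    rw [Real.norm_eq_abs, abs_of_nonneg (by positivity)]
    have hxab : x ≤ a + b := by linarith [hx.2]
    gcongr
  have := (convex_Icc b a).norm_image_sub_le_of_norm_hasDerivWithin_le hderiv hbound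
    (Set.left_mem_Icc.2 hab) (Set.right_mem_Icc.2 hab)
  simpa [Real.norm_eq_abs] using this

private lemma memLp_of_int {Ω : Type*} [MeasurableSpace Ω] {μ : Measure Ω} {f : Ω → ℝ} {r : ℝ}
    (hr : 0 < r) (hm : Measurable f) (hi : Integrable (fun x => |f x| ^ r) μ) :
    MemLp f (ENNReal.ofReal r) μ := by
  have hq0 : ENNReal.ofReal r ≠ 0 := by simp [hr, hr.le]
  have hq : (ENNReal.ofReal r) / (ENNReal.ofReal r) = 1 :=
    ENNReal.div_self hq0 ENNReal.ofReal_ne_top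
  have := (memLp_norm_rpow_iff (μ := μ) (q := ENNReal.ofReal r) (p := ENNReal.ofReal r)
    hm.aestronglyMeasurable hq0 ENNReal.ofReal_ne_top)
  rw [hq, ENNReal.toReal_ofReal hr.le] at this
  rw [← this, memLp_one_iff_integrable]
  simpa [Real.norm_eq_abs] using hi

private lemma int_of_memLp {Ω : Type*} [MeasurableSpace Ω] {μ : Measure Ω} {f : Ω → ℝ} {r : ℝ}
    (hr : 0 < r) (h : MemLp f (ENNReal.ofReal r) μ) :
    Integrable (fun x => |f x| ^ r) μ := by
  have := h.integrable_norm_rpow (by simp [hr, hr.le]) ENNReal.ofReal_ne_top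
  rw [ENNReal.toReal_ofReal hr.le] at this
  simpa [Real.norm_eq_abs] using this

private lemma lpNorm_eq_eLpNorm {Ω : Type*} [MeasurableSpace Ω] {μ : Measure Ω} {f : Ω → ℝ}
    {r : ℝ} (hr : 0 < r) (h : MemLp f (ENNReal.ofReal r) μ) :
    lpNorm μ r f = (eLpNorm f (ENNReal.ofReal r) μ).toReal := by
  rw [h.eLpNorm_eq_integral_rpow_norm (by simp [hr, hr.le]) ENNReal.ofReal_ne_top,
    ENNReal.toReal_ofReal (by positivity)]
  simp only [_root_.lpNorm, Real.norm_eq_abs, ENNReal.toReal_ofReal hr.le, one_div]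

/-- On a finite measure space, for `p ≥ 2` and `u, v ∈ L^{2p-2}(μ)`, both
`u, v ∈ L^p(μ) ∩ L^2(μ)`, the functions `‖u‖_{L^p}^p·u` and `‖v‖_{L^p}^p·v` are in `L^2(μ)`, and
`‖ ‖u‖_{L^p}^p u − ‖v‖_{L^p}^p v ‖_{L^2} ≤ ‖u‖_{L^p}^p ‖u−v‖_{L^2}
  + p(‖u‖_{L^p} + ‖v‖_{L^p})^{p-1} ‖u−v‖_{L^p} ‖v‖_{L^2}`;
in particular `u ↦ ‖u‖_{L^p}^p u` is Lipschitz on balls from `L^{2p-2}(μ)` to `L^2(μ)`. -/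
theorem lpNormPowSmul_lipschitz_on_balls {Ω : Type*} [MeasurableSpace Ω] (μ : Measure Ω)
    [IsFiniteMeasure μ]
    (p : ℝ) (hp : 2 ≤ p) (u v : Ω → ℝ)
    (hum : Measurable u) (hvm : Measurable v)
    (hu : Integrable (fun x => |u x| ^ (2 * p - 2)) μ)
    (hv : Integrable (fun x => |v x| ^ (2 * p - 2)) μ) :
    Integrable (fun x => |u x| ^ p) μ ∧ Integrable (fun x => |u x| ^ (2 : ℝ)) μ ∧
    Integrable (fun x => |v x| ^ p) μ ∧ Integrable (fun x => |v x| ^ (2 : ℝ)) μ ∧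
    Integrable (fun x => |lpNorm μ p u ^ p * u x| ^ (2 : ℝ)) μ ∧
    Integrable (fun x => |lpNorm μ p v ^ p * v x| ^ (2 : ℝ)) μ ∧
    lpNorm μ 2 (fun x => lpNorm μ p u ^ p * u x - lpNorm μ p v ^ p * v x) ≤
      lpNorm μ p u ^ p * lpNorm μ 2 (fun x => u x - v x) +
        p * (lpNorm μ p u + lpNorm μ p v) ^ (p - 1) * lpNorm μ p (fun x => u x - v x) *
          lpNorm μ 2 v := by
  have hp1 : (1 : ℝ) ≤ p := by linarith
  have hp0 : (0 : ℝ) < p := by linarith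
  have h2p : (0 : ℝ) < 2 * p - 2 := by linarith
  have h20 : (0 : ℝ) < 2 := by norm_num
  have h2e : (ENNReal.ofReal 2) = 2 := by simp [ENNReal.ofReal_ofNat]
  -- MemLp at the top exponent
  have hu2p : MemLp u (ENNReal.ofReal (2 * p - 2)) μ := memLp_of_int h2p hum hu
  have hv2p : MemLp v (ENNReal.ofReal (2 * p - 2)) μ := memLp_of_int h2p hvm hv
  -- lower exponents
  have hle_p : ENNReal.ofReal p ≤ ENNReal.ofReal (2 * p - 2) :=
    ENNReal.ofReal_le_ofReal (by linarith)
  have hle_2 : ENNReal.ofReal 2 ≤ ENNReal.ofReal (2 * p - 2) :=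
    ENNReal.ofReal_le_ofReal (by linarith)
  have hup : MemLp u (ENNReal.ofReal p) μ := hu2p.mono_exponent hle_p
  have hvp : MemLp v (ENNReal.ofReal p) μ := hv2p.mono_exponent hle_p
  have hu2 : MemLp u (ENNReal.ofReal 2) μ := hu2p.mono_exponent hle_2
  have hv2 : MemLp v (ENNReal.ofReal 2) μ := hv2p.mono_exponent hle_2
  have hiu_p := int_of_memLp hp0 hup
  have hiv_p := int_of_memLp hp0 hvp
  have hiu_2 := int_of_memLp h20 hu2
  have hiv_2 := int_of_memLp h20 hv2
  refine ⟨hiu_p, hiu_2, hiv_p, hiv_2, ?_, ?_, ?_⟩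
  · have : (fun x => |lpNorm μ p u ^ p * u x| ^ (2 : ℝ)) =
        fun x => |lpNorm μ p u ^ p| ^ (2 : ℝ) * |u x| ^ (2 : ℝ) := by
      funext x
      rw [abs_mul, Real.mul_rpow (abs_nonneg _) (abs_nonneg _)]
    rw [this]
    exact hiu_2.const_mul _
  · have : (fun x => |lpNorm μ p v ^ p * v x| ^ (2 : ℝ)) =
        fun x => |lpNorm μ p v ^ p| ^ (2 : ℝ) * |v x| ^ (2 : ℝ) := by
      funext x
      rw [abs_mul, Real.mul_rpow (abs_nonneg _) (abs_nonneg _)]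
    rw [this]
    exact hiv_2.const_mul _
  -- the main inequality
  set A := lpNorm μ p u with hAdef
  set B := lpNorm μ p v with hBdef
  have hA : A = (eLpNorm u (ENNReal.ofReal p) μ).toReal := lpNorm_eq_eLpNorm hp0 hup
  have hB : B = (eLpNorm v (ENNReal.ofReal p) μ).toReal := lpNorm_eq_eLpNorm hp0 hvp
  have hA0 : 0 ≤ A := hA ▸ ENNReal.toReal_nonneg
  have hB0 : 0 ≤ B := hB ▸ ENNReal.toReal_nonneg
  have hw2 : MemLp (fun x => u x - v x) (ENNReal.ofReal 2) μ := hu2.sub hv2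
  have hwp : MemLp (fun x => u x - v x) (ENNReal.ofReal p) μ := hup.sub hvp
  -- reverse triangle inequality in L^p
  have htri : |A - B| ≤ lpNorm μ p (fun x => u x - v x) := by
    rw [lpNorm_eq_eLpNorm hp0 hwp]
    have h1p : (1 : ℝ≥0∞) ≤ ENNReal.ofReal p := by
      rw [← ENNReal.ofReal_one]; exact ENNReal.ofReal_le_ofReal hp1
    have huv : eLpNorm u (ENNReal.ofReal p) μ ≤
        eLpNorm (fun x => u x - v x) (ENNReal.ofReal p) μ + eLpNorm v (ENNReal.ofReal p) μ := by
      have : u = (fun x => u x - v x) + v := by funext x; simp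
      nth_rewrite 1 [this]
      exact eLpNorm_add_le hwp.aestronglyMeasurable hvp.aestronglyMeasurable h1p
    have hvu : eLpNorm v (ENNReal.ofReal p) μ ≤
        eLpNorm (fun x => u x - v x) (ENNReal.ofReal p) μ + eLpNorm u (ENNReal.ofReal p) μ := by
      have : v = (fun x => -(u x - v x)) + u := by funext x; simp
      nth_rewrite 1 [this]
      refine le_trans (eLpNorm_add_le (hwp.neg.aestronglyMeasurable)
        hup.aestronglyMeasurable h1p) ?_
      have hnn : (fun x => -(u x - v x)) = -(fun x => u x - v x) := rfl
      rw [hnn, eLpNorm_neg]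
    rw [abs_sub_le_iff]
    constructor
    · rw [hA, hB, sub_le_iff_le_add]
      rw [← ENNReal.toReal_add hwp.eLpNorm_ne_top hvp.eLpNorm_ne_top]
      exact ENNReal.toReal_mono
        (ENNReal.add_ne_top.2 ⟨hwp.eLpNorm_ne_top, hvp.eLpNorm_ne_top⟩) huv
    · rw [hA, hB, sub_le_iff_le_add]
      rw [← ENNReal.toReal_add hwp.eLpNorm_ne_top hup.eLpNorm_ne_top]
      exact ENNReal.toReal_mono
        (ENNReal.add_ne_top.2 ⟨hwp.eLpNorm_ne_top, hup.eLpNorm_ne_top⟩) hvu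
  -- decompose and apply triangle inequality in L^2
  have hconst1 : MemLp (fun x => A ^ p * (u x - v x)) (ENNReal.ofReal 2) μ := by
    simpa [Pi.smul_def, smul_eq_mul] using hw2.const_smul (A ^ p)
  have hconst2 : MemLp (fun x => (A ^ p - B ^ p) * v x) (ENNReal.ofReal 2) μ := by
    simpa [Pi.smul_def, smul_eq_mul] using hv2.const_smul (A ^ p - B ^ p)
  have hf : MemLp (fun x => A ^ p * u x - B ^ p * v x) (ENNReal.ofReal 2) μ := by
    have h1 : MemLp (fun x => A ^ p * u x) (ENNReal.ofReal 2) μ := by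
      simpa [Pi.smul_def, smul_eq_mul] using hu2.const_smul (A ^ p)
    have h2 : MemLp (fun x => B ^ p * v x) (ENNReal.ofReal 2) μ := by
      simpa [Pi.smul_def, smul_eq_mul] using hv2.const_smul (B ^ p)
    exact h1.sub h2
  have hsplit : (fun x => A ^ p * u x - B ^ p * v x) =
      (fun x => A ^ p * (u x - v x)) + fun x => (A ^ p - B ^ p) * v x := by
    funext x; simp; ring
  have h12 : (1 : ℝ≥0∞) ≤ ENNReal.ofReal 2 := by
    rw [h2e]; exact one_le_two
  have hmain : eLpNorm (fun x => A ^ p * u x - B ^ p * v x) (ENNReal.ofReal 2) μ ≤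
      ENNReal.ofReal (A ^ p) * eLpNorm (fun x => u x - v x) (ENNReal.ofReal 2) μ +
        ENNReal.ofReal |A ^ p - B ^ p| * eLpNorm v (ENNReal.ofReal 2) μ := by
    rw [hsplit]
    refine le_trans (eLpNorm_add_le hconst1.aestronglyMeasurable
      hconst2.aestronglyMeasurable h12) ?_
    have e1 : eLpNorm (fun x => A ^ p * (u x - v x)) (ENNReal.ofReal 2) μ =
        ENNReal.ofReal (A ^ p) * eLpNorm (fun x => u x - v x) (ENNReal.ofReal 2) μ := by
      have hfeq : (fun x => A ^ p * (u x - v x)) = (A ^ p) • (fun x => u x - v x) := rfl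
      rw [hfeq, eLpNorm_const_smul, Real.enorm_eq_ofReal (by positivity)]
    have e2 : eLpNorm (fun x => (A ^ p - B ^ p) * v x) (ENNReal.ofReal 2) μ =
        ENNReal.ofReal |A ^ p - B ^ p| * eLpNorm v (ENNReal.ofReal 2) μ := by
      have hfeq : (fun x => (A ^ p - B ^ p) * v x) = (A ^ p - B ^ p) • v := rfl
      rw [hfeq, eLpNorm_const_smul, ← Real.enorm_abs _,
        Real.enorm_eq_ofReal (abs_nonneg _)]
    rw [e1, e2]
  -- pass to real numbers
  have hL2f : lpNorm μ 2 (fun x => A ^ p * u x - B ^ p * v x) ≤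
      A ^ p * lpNorm μ 2 (fun x => u x - v x) + |A ^ p - B ^ p| * lpNorm μ 2 v := by
    rw [lpNorm_eq_eLpNorm h20 hf, lpNorm_eq_eLpNorm h20 hw2, lpNorm_eq_eLpNorm h20 hv2]
    have hfin1 : ENNReal.ofReal (A ^ p) *
        eLpNorm (fun x => u x - v x) (ENNReal.ofReal 2) μ ≠ ⊤ :=
      ENNReal.mul_ne_top ENNReal.ofReal_ne_top hw2.eLpNorm_ne_top
    have hfin2 : ENNReal.ofReal |A ^ p - B ^ p| * eLpNorm v (ENNReal.ofReal 2) μ ≠ ⊤ :=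
      ENNReal.mul_ne_top ENNReal.ofReal_ne_top hv2.eLpNorm_ne_top
    calc (eLpNorm (fun x => A ^ p * u x - B ^ p * v x) (ENNReal.ofReal 2) μ).toReal
        ≤ (ENNReal.ofReal (A ^ p) * eLpNorm (fun x => u x - v x) (ENNReal.ofReal 2) μ +
            ENNReal.ofReal |A ^ p - B ^ p| * eLpNorm v (ENNReal.ofReal 2) μ).toReal :=
          ENNReal.toReal_mono (ENNReal.add_ne_top.2 ⟨hfin1, hfin2⟩) hmain
      _ = A ^ p * (eLpNorm (fun x => u x - v x) (ENNReal.ofReal 2) μ).toReal +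
            |A ^ p - B ^ p| * (eLpNorm v (ENNReal.ofReal 2) μ).toReal := by
          rw [ENNReal.toReal_add hfin1 hfin2, ENNReal.toReal_mul, ENNReal.toReal_mul,
            ENNReal.toReal_ofReal (by positivity), ENNReal.toReal_ofReal (abs_nonneg _)]
  -- finish
  refine le_trans hL2f ?_
  have hV2 : 0 ≤ lpNorm μ 2 v := by
    rw [lpNorm_eq_eLpNorm h20 hv2]; exact ENNReal.toReal_nonneg
  have hstep : p * (A + B) ^ (p - 1) * |A - B| ≤
      p * (A + B) ^ (p - 1) * lpNorm μ p (fun x => u x - v x) := by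
    have hab : (0 : ℝ) ≤ A + B := by linarith
    exact mul_le_mul_of_nonneg_left htri (by positivity)
  exact add_le_add le_rfl (mul_le_mul_of_nonneg_right
    (le_trans (abs_rpow_sub_rpow_le hp1 hA0 hB0) hstep) hV2)
end

section
/- Let p be a real number with p ≥ 2, d ≥ 1, and let u : ℝ^d → ℝ be twice continuously differentiable with compact support. Then −∫_{ℝ^d} Δu(x) · |u(x)|^{p-2}u(x) dx = (p − 1) ∫_{ℝ^d} |u(x)|^{p-2} |∇u(x)|^2 dx. -/
open MeasureTheory Filter

/-- The Laplacian `Δu(x) = ∑ i, ∂²u/∂x_i²(x)` as the sum of second partial derivatives. -/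
noncomputable def lap {d : ℕ} (u : EuclideanSpace ℝ (Fin d) → ℝ)
    (x : EuclideanSpace ℝ (Fin d)) : ℝ :=
  ∑ i : Fin d, fderiv ℝ (fun y => fderiv ℝ u y (EuclideanSpace.single i (1 : ℝ))) x
    (EuclideanSpace.single i (1 : ℝ))

lemma psi_cont {p : ℝ} (hp : 2 ≤ p) : Continuous (fun t : ℝ => |t| ^ (p - 2)) :=
  (Real.continuous_rpow_const (by linarith)).comp continuous_abs

lemma hasDerivAt_signedPow {p : ℝ} (hp : 2 ≤ p) (s : ℝ) :
    HasDerivAt (fun t : ℝ => |t| ^ (p - 2) * t) ((p - 1) * |s| ^ (p - 2)) s := by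
  rcases eq_or_lt_of_le hp with hp2 | hp2
  · simp only [← hp2, sub_self, Real.rpow_zero, one_mul]
    norm_num
    exact hasDerivAt_id s
  have hq : 0 < p - 2 := by linarith
  rcases lt_trichotomy s 0 with hs | rfl | hs
  · have key : HasDerivAt (fun t : ℝ => -((-t) ^ (p - 1))) ((p - 1) * |s| ^ (p - 2)) s := by
      have h1 : HasDerivAt (fun t : ℝ => (-t : ℝ)) (-1) s := (hasDerivAt_id s).neg
      have h2 : HasDerivAt (fun y : ℝ => y ^ (p - 1)) ((p - 1) * (-s) ^ (p - 1 - 1)) (-s) :=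
        Real.hasDerivAt_rpow_const (Or.inl (by linarith))
      have h3 := (h2.comp s h1).neg
      have h4 : -((p - 1) * (-s) ^ (p - 1 - 1) * -1) = (p - 1) * |s| ^ (p - 2) := by
        rw [abs_of_neg hs]
        ring_nf
      rw [← h4]
      exact h3
    apply key.congr_of_eventuallyEq
    filter_upwards [isOpen_Iio.eventually_mem (show s ∈ Set.Iio 0 from hs)] with t ht
    have ht0 : (0:ℝ) < -t := by simpa using ht
    rw [abs_of_neg (Set.mem_Iio.1 ht)]
    have : (-t) ^ (p - 1) = (-t) ^ (p - 2) * (-t) ^ (1:ℝ) := by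
      rw [← Real.rpow_add ht0]; ring_nf
    rw [this, Real.rpow_one]; ring
  · have h0 : |(0:ℝ)| ^ (p - 2) = 0 := by
      rw [abs_zero, Real.rpow_eq_zero_iff_of_nonneg le_rfl]
      exact ⟨rfl, by linarith⟩
    rw [h0, mul_zero, hasDerivAt_iff_tendsto_slope]
    have hcont : ContinuousAt (fun t : ℝ => |t| ^ (p - 2)) 0 := (psi_cont hp).continuousAt
    have : Tendsto (fun t : ℝ => |t| ^ (p - 2)) (nhdsWithin 0 {(0:ℝ)}ᶜ) (nhds 0) := by
      have := hcont.tendsto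
      rw [h0] at this
      exact this.mono_left nhdsWithin_le_nhds
    apply this.congr'
    filter_upwards [self_mem_nhdsWithin] with t ht
    have ht0 : t ≠ 0 := ht
    simp [slope_def_field, h0, div_eq_iff ht0]
    field_simp
  · have key : HasDerivAt (fun t : ℝ => t ^ (p - 1)) ((p - 1) * |s| ^ (p - 2)) s := by
      have h2 : HasDerivAt (fun y : ℝ => y ^ (p - 1)) ((p - 1) * s ^ (p - 1 - 1)) s :=
        Real.hasDerivAt_rpow_const (Or.inl (by linarith))
      convert h2 using 2
      rw [abs_of_pos hs]; ring_nf
    apply key.congr_of_eventuallyEq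
    filter_upwards [isOpen_Ioi.eventually_mem (show s ∈ Set.Ioi 0 from hs)] with t ht
    have ht0 : (0:ℝ) < t := ht
    rw [abs_of_pos ht0]
    rw [show p - 1 = p - 2 + 1 by ring, Real.rpow_add ht0, Real.rpow_one]

lemma grad_sq {d : ℕ} (u : EuclideanSpace ℝ (Fin d) → ℝ) (x : EuclideanSpace ℝ (Fin d)) :
    ‖gradient u x‖ ^ 2 = ∑ i : Fin d, (fderiv ℝ u x (EuclideanSpace.single i (1:ℝ))) ^ 2 := by
  have h : ∀ i : Fin d, fderiv ℝ u x (EuclideanSpace.single i (1:ℝ)) = gradient u x i := by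
    intro i
    rw [gradient]
    have := InnerProductSpace.toDual_symm_apply (𝕜 := ℝ)
      (E := EuclideanSpace ℝ (Fin d)) (x := EuclideanSpace.single i (1:ℝ)) (y := fderiv ℝ u x)
    rw [← this, real_inner_comm, EuclideanSpace.inner_single_left]
    simp
  simp_rw [h]
  rw [EuclideanSpace.norm_eq, Real.sq_sqrt (by positivity)]
  simp [Real.norm_eq_abs, sq_abs]

/-- For `p ≥ 2`, `d ≥ 1` and `u : ℝ^d → ℝ` twice continuously
differentiable with compact support,
`−∫ Δu · |u|^{p-2}u dx = (p − 1) ∫ |u|^{p-2} |∇u|² dx`. -/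
theorem laplacian_signedPower_integration_by_parts (p : ℝ) (hp : 2 ≤ p)
    (d : ℕ) (hd : 1 ≤ d) (u : EuclideanSpace ℝ (Fin d) → ℝ)
    (hu : ContDiff ℝ 2 u) (hsupp : HasCompactSupport u) :
    -∫ x, lap u x * (|u x| ^ (p - 2) * u x) =
      (p - 1) * ∫ x, |u x| ^ (p - 2) * ‖gradient u x‖ ^ 2 := by
  set φ : ℝ → ℝ := fun t => |t| ^ (p - 2) * t with hφ
  set ψ : ℝ → ℝ := fun t => (p - 1) * |t| ^ (p - 2) with hψ
  set e : Fin d → EuclideanSpace ℝ (Fin d) := fun i => EuclideanSpace.single i (1:ℝ) with he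
  set g : Fin d → EuclideanSpace ℝ (Fin d) → ℝ := fun i x => fderiv ℝ u x (e i) with hg
  have hu1 : Differentiable ℝ u := hu.differentiable (by norm_num)
  -- φ ∘ u
  have hφux : ∀ x, HasFDerivAt (fun y => φ (u y)) (ψ (u x) • fderiv ℝ u x) x := fun x =>
    (hasDerivAt_signedPow hp (u x)).comp_hasFDerivAt x (hu1 x).hasFDerivAt
  have hφu_diff : Differentiable ℝ (fun y => φ (u y)) := fun x => (hφux x).differentiableAt
  have hφu_fderiv : ∀ x i, fderiv ℝ (fun y => φ (u y)) x (e i) = ψ (u x) * g i x := by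
    intro x i
    rw [(hφux x).fderiv]
    simp [hg]
  have hφu_cont : Continuous (fun y => φ (u y)) := hφu_diff.continuous
  have hψu_cont : Continuous (fun y => ψ (u y)) :=
    (continuous_const.mul (psi_cont hp)).comp hu.continuous
  have hφu_supp : HasCompactSupport (fun y => φ (u y)) :=
    hsupp.comp_left (g := φ) (by simp [hφ])
  -- g i
  have hfd : ContDiff ℝ 1 (fderiv ℝ u) := hu.fderiv_right (by norm_num)
  have hg_cd : ∀ i, ContDiff ℝ 1 (g i) := fun i =>
    (ContinuousLinearMap.apply ℝ ℝ (e i)).contDiff.comp hfd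
  have hg_diff : ∀ i, Differentiable ℝ (g i) := fun i => (hg_cd i).differentiable one_ne_zero
  have hg_cont : ∀ i, Continuous (g i) := fun i => (hg_diff i).continuous
  have hg_supp : ∀ i, HasCompactSupport (g i) := fun i => hsupp.fderiv_apply ℝ (e i)
  have hDg_cont : ∀ i, Continuous (fun x => fderiv ℝ (g i) x (e i)) := fun i =>
    (ContinuousLinearMap.apply ℝ ℝ (e i)).continuous.comp ((hg_cd i).continuous_fderiv one_ne_zero)
  have hDg_supp : ∀ i, HasCompactSupport (fun x => fderiv ℝ (g i) x (e i)) := fun i =>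
    (hg_supp i).fderiv_apply ℝ (e i)
  -- integrability
  have I1 : ∀ i, Integrable (fun x => φ (u x) * g i x) := fun i =>
    (hφu_cont.mul (hg_cont i)).integrable_of_hasCompactSupport ((hg_supp i).mul_left)
  have I2 : ∀ i, Integrable (fun x => φ (u x) * fderiv ℝ (g i) x (e i)) := fun i =>
    (hφu_cont.mul (hDg_cont i)).integrable_of_hasCompactSupport ((hDg_supp i).mul_left)
  have I3 : ∀ i, Integrable (fun x => ψ (u x) * g i x * g i x) := fun i =>
    ((hψu_cont.mul (hg_cont i)).mul (hg_cont i)).integrable_of_hasCompactSupport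
      ((hg_supp i).mul_left)
  -- integration by parts per coordinate
  have key : ∀ i, ∫ x, φ (u x) * fderiv ℝ (g i) x (e i) = -∫ x, ψ (u x) * g i x * g i x := by
    intro i
    have := integral_mul_fderiv_eq_neg_fderiv_mul_of_integrable (μ := volume)
      (f := fun y => φ (u y)) (g := g i) (v := e i)
      (by simp_rw [hφu_fderiv]; exact I3 i) (I2 i) (I1 i) (fun x _ => hφu_diff x) (fun x _ => hg_diff i x)
    rw [this]
    congr 1
    exact integral_congr_ae (Eventually.of_forall fun x => by
      show (fderiv ℝ (fun y => φ (u y)) x) (e i) * g i x = ψ (u x) * g i x * g i x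
      rw [hφu_fderiv])
  -- sum over i
  have sum_eq : ∫ x, φ (u x) * lap u x = -∫ x, ψ (u x) * ‖gradient u x‖ ^ 2 := by
    have l1 : ∫ x, φ (u x) * lap u x
        = ∑ i : Fin d, ∫ x, φ (u x) * fderiv ℝ (g i) x (e i) := by
      rw [← integral_finset_sum _ (fun i _ => I2 i)]
      exact integral_congr_ae (Eventually.of_forall fun x => by
        simp [lap, Finset.mul_sum, hg, he])
    have l2 : ∫ x, ψ (u x) * ‖gradient u x‖ ^ 2
        = ∑ i : Fin d, ∫ x, ψ (u x) * g i x * g i x := by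
      rw [← integral_finset_sum _ (fun i _ => I3 i)]
      exact integral_congr_ae (Eventually.of_forall fun x => by
        show ψ (u x) * ‖gradient u x‖ ^ 2 = ∑ i : Fin d, ψ (u x) * g i x * g i x
        rw [grad_sq, Finset.mul_sum]
        exact Finset.sum_congr rfl fun i _ => by simp only [hg, he]; ring)
    rw [l1, l2]
    simp_rw [key]
    rw [← Finset.sum_neg_distrib]
  -- conclude
  have comm : ∫ x, lap u x * (|u x| ^ (p - 2) * u x) = ∫ x, φ (u x) * lap u x :=
    integral_congr_ae (Eventually.of_forall fun x => by
      show lap u x * (|u x| ^ (p - 2) * u x) = φ (u x) * lap u x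
      rw [hφ]; ring)
  rw [comm, sum_eq, neg_neg, ← integral_const_mul]
  exact integral_congr_ae (Eventually.of_forall fun x => by
    show ψ (u x) * ‖gradient u x‖ ^ 2 = (p - 1) * (|u x| ^ (p - 2) * ‖gradient u x‖ ^ 2)
    rw [hψ]; ring)
end

section
/- Let p be a real number with p ≥ 2, d ≥ 1, and let u, v : ℝ^d → ℝ be twice continuously differentiable with compact support. Then ∫_{ℝ^d} ((Δu(x) − |u(x)|^{p-2}u(x)) − (Δv(x) − |v(x)|^{p-2}v(x)))(u(x) − v(x)) dx ≤ −∫_{ℝ^d} |∇(u − v)(x)|^2 dx − (1/2)∫_{ℝ^d} |u(x)|^{p-2}(u(x) − v(x))^2 dx − (1/2)∫_{ℝ^d} |v(x)|^{p-2}(u(x) − v(x))^2 dx; in particular, this quantity is ≤ 0, i.e., the operator u ↦ Δu − |u|^{p-2}u is monotone (with reversed sign) on such functions. -/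
open MeasureTheory

section Aux
open RealInnerProductSpace
variable {d : ℕ}

/-- Pointwise monotonicity inequality for the signed power `s ↦ |s|^{p-2} s`. -/
lemma aux_pointwise (p : ℝ) (hp : 2 ≤ p) (a b : ℝ) :
    (1/2) * |a| ^ (p-2) * (a-b)^2 + (1/2) * |b| ^ (p-2) * (a-b)^2
      ≤ (|a| ^ (p-2) * a - |b| ^ (p-2) * b) * (a - b) := by
  have hA : (0:ℝ) ≤ |a| ^ (p-2) := Real.rpow_nonneg (abs_nonneg a) _
  have hB : (0:ℝ) ≤ |b| ^ (p-2) := Real.rpow_nonneg (abs_nonneg b) _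
  have key : 0 ≤ (|a| ^ (p-2) - |b| ^ (p-2)) * (a^2 - b^2) := by
    rcases le_total |a| |b| with h | h
    · have h1 : |a| ^ (p-2) ≤ |b| ^ (p-2) :=
        Real.rpow_le_rpow (abs_nonneg a) h (by linarith)
      have h2 : a^2 ≤ b^2 := by
        rw [← sq_abs a, ← sq_abs b]; exact pow_le_pow_left₀ (abs_nonneg a) h 2
      nlinarith
    · have h1 : |b| ^ (p-2) ≤ |a| ^ (p-2) :=
        Real.rpow_le_rpow (abs_nonneg b) h (by linarith)
      have h2 : b^2 ≤ a^2 := by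
        rw [← sq_abs a, ← sq_abs b]; exact pow_le_pow_left₀ (abs_nonneg b) h 2
      nlinarith
  nlinarith

lemma aux_pd_contDiff (w : EuclideanSpace ℝ (Fin d) → ℝ) (hw : ContDiff ℝ 2 w) (i : Fin d) :
    ContDiff ℝ 1 (fun y => fderiv ℝ w y (EuclideanSpace.single i (1:ℝ))) :=
  (hw.fderiv_right (by norm_num)).clm_apply contDiff_const

lemma aux_pd_supp (w : EuclideanSpace ℝ (Fin d) → ℝ) (hws : HasCompactSupport w) (i : Fin d) :
    HasCompactSupport (fun y => fderiv ℝ w y (EuclideanSpace.single i (1:ℝ))) := by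
  apply HasCompactSupport.comp_left (g := fun L : EuclideanSpace ℝ (Fin d) →L[ℝ] ℝ =>
    L (EuclideanSpace.single i (1:ℝ))) (hws.fderiv ℝ)
  simp

lemma aux_sd_cont (w : EuclideanSpace ℝ (Fin d) → ℝ) (hw : ContDiff ℝ 2 w) (i : Fin d) :
    Continuous (fun x => fderiv ℝ
      (fun y => fderiv ℝ w y (EuclideanSpace.single i (1:ℝ))) x
      (EuclideanSpace.single i (1:ℝ))) :=
  ((((aux_pd_contDiff w hw i).fderiv_right (m := 0) (by norm_num)).clm_apply
    contDiff_const)).continuous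

lemma aux_lap_cont (w : EuclideanSpace ℝ (Fin d) → ℝ) (hw : ContDiff ℝ 2 w) :
    Continuous (lap w) :=
  continuous_finset_sum _ fun i _ => aux_sd_cont w hw i

lemma aux_grad_sq (w : EuclideanSpace ℝ (Fin d) → ℝ)
    (x : EuclideanSpace ℝ (Fin d)) :
    ‖gradient w x‖ ^ 2 = ∑ i : Fin d, (fderiv ℝ w x (EuclideanSpace.single i (1:ℝ))) ^ 2 := by
  have h1 : ∀ i : Fin d, gradient w x i = fderiv ℝ w x (EuclideanSpace.single i (1:ℝ)) := by
    intro i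
    have h2 : ⟪gradient w x, (EuclideanSpace.single i (1:ℝ) : EuclideanSpace ℝ (Fin d))⟫
        = fderiv ℝ w x (EuclideanSpace.single i (1:ℝ)) :=
      InnerProductSpace.toDual_symm_apply
    rw [EuclideanSpace.inner_single_right] at h2
    simpa using h2
  rw [EuclideanSpace.norm_eq, Real.sq_sqrt (by positivity)]
  simp [h1, sq_abs]

/-- Integration by parts: `∫ Δw · w = −∫ ‖∇w‖²`. -/
lemma aux_ibp (w : EuclideanSpace ℝ (Fin d) → ℝ) (hw : ContDiff ℝ 2 w)
    (hws : HasCompactSupport w) :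
    ∫ x, lap w x * w x = -∫ x, ‖gradient w x‖ ^ 2 := by
  set e : Fin d → EuclideanSpace ℝ (Fin d) := fun i => EuclideanSpace.single i (1:ℝ) with he
  set f : Fin d → EuclideanSpace ℝ (Fin d) → ℝ := fun i y => fderiv ℝ w y (e i) with hf
  have hfC1 : ∀ i, ContDiff ℝ 1 (f i) := fun i => aux_pd_contDiff w hw i
  have hfsupp : ∀ i, HasCompactSupport (f i) := fun i => aux_pd_supp w hws i
  have hint1 : ∀ i : Fin d, Integrable (fun x => fderiv ℝ (f i) x (e i) * w x) := by
    intro i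
    exact (Continuous.mul (aux_sd_cont w hw i) (hw.continuous)).integrable_of_hasCompactSupport
      hws.mul_left
  have hint2 : ∀ i : Fin d, Integrable (fun x => (f i x) ^ 2) := by
    intro i
    have : Continuous (fun x => (f i x)^2) := ((hfC1 i).continuous).pow 2
    exact this.integrable_of_hasCompactSupport (by
      simpa [sq, Pi.mul_def] using (hfsupp i).mul_left (f' := f i))
  have key : ∀ i : Fin d, ∫ x, fderiv ℝ (f i) x (e i) * w x = -∫ x, (f i x) ^ 2 := by
    intro i
    obtain ⟨C, hC⟩ := ContDiff.lipschitzWith_of_hasCompactSupport (hfsupp i) (hfC1 i) (by norm_num)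
    obtain ⟨D, hD⟩ := ContDiff.lipschitzWith_of_hasCompactSupport hws hw (by norm_num)
    have H := LipschitzWith.integral_lineDeriv_mul_eq (μ := volume) hC hD hws (e i)
    have h1 : ∀ x, lineDeriv ℝ (f i) x (e i) = fderiv ℝ (f i) x (e i) := fun x =>
      (((hfC1 i).differentiable (by norm_num)) x).lineDeriv_eq_fderiv
    have h2 : ∀ x, lineDeriv ℝ w x (-(e i)) = -(f i x) := by
      intro x
      rw [((hw.differentiable (by norm_num)) x).lineDeriv_eq_fderiv]
      simp [hf]
    simp only [h1, h2] at H
    rw [H, ← integral_neg]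
    congr 1; funext x; ring
  have hlap : (fun x => lap w x * w x)
      = fun x => ∑ i : Fin d, fderiv ℝ (f i) x (e i) * w x := by
    funext x; rw [lap, Finset.sum_mul]
  have hgrad : (fun x : EuclideanSpace ℝ (Fin d) => ‖gradient w x‖ ^ 2)
      = fun x => ∑ i : Fin d, (f i x) ^ 2 := by
    funext x; exact aux_grad_sq w x
  rw [hlap, hgrad, integral_finset_sum _ (fun i _ => hint1 i),
    integral_finset_sum _ (fun i _ => hint2 i), ← Finset.sum_neg_distrib]
  exact Finset.sum_congr rfl fun i _ => key i

lemma aux_lap_sub (u v : EuclideanSpace ℝ (Fin d) → ℝ)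
    (hu : ContDiff ℝ 2 u) (hv : ContDiff ℝ 2 v) (x : EuclideanSpace ℝ (Fin d)) :
    lap (fun y => u y - v y) x = lap u x - lap v x := by
  rw [lap, lap, lap, ← Finset.sum_sub_distrib]
  refine Finset.sum_congr rfl fun i _ => ?_
  set e := EuclideanSpace.single i (1:ℝ)
  have h1 : (fun y => fderiv ℝ (fun z => u z - v z) y e)
      = fun y => fderiv ℝ u y e - fderiv ℝ v y e := by
    funext y
    rw [fderiv_fun_sub ((hu.differentiable (by norm_num)) y) ((hv.differentiable (by norm_num)) y)]
    simp
  rw [h1]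
  have h2 := fderiv_fun_sub (𝕜 := ℝ)
    ((aux_pd_contDiff u hu i).differentiable (by norm_num) x)
    ((aux_pd_contDiff v hv i).differentiable (by norm_num) x)
  rw [h2]
  simp
  rfl

end Aux

/-- For `p ≥ 2`, `d ≥ 1` and `u, v : ℝ^d → ℝ` twice continuously
differentiable with compact support,
`∫ ((Δu − |u|^{p-2}u) − (Δv − |v|^{p-2}v))(u − v) dx
  ≤ −∫ |∇(u − v)|² − (1/2)∫ |u|^{p-2}(u − v)² − (1/2)∫ |v|^{p-2}(u − v)²`;
in particular this quantity is `≤ 0` (monotonicity, with reversed sign). -/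
theorem monotonicity_of_damped_laplacian (p : ℝ) (hp : 2 ≤ p)
    (d : ℕ) (hd : 1 ≤ d) (u v : EuclideanSpace ℝ (Fin d) → ℝ)
    (hu : ContDiff ℝ 2 u) (husupp : HasCompactSupport u)
    (hv : ContDiff ℝ 2 v) (hvsupp : HasCompactSupport v) :
    (∫ x, ((lap u x - |u x| ^ (p - 2) * u x) - (lap v x - |v x| ^ (p - 2) * v x)) *
        (u x - v x) ≤
      -(∫ x, ‖gradient (fun y => u y - v y) x‖ ^ 2) -
        (1 / 2) * (∫ x, |u x| ^ (p - 2) * (u x - v x) ^ 2) -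
        (1 / 2) * (∫ x, |v x| ^ (p - 2) * (u x - v x) ^ 2)) ∧
    ∫ x, ((lap u x - |u x| ^ (p - 2) * u x) - (lap v x - |v x| ^ (p - 2) * v x)) *
        (u x - v x) ≤ 0 := by
  have hw : ContDiff ℝ 2 (fun y => u y - v y) := hu.sub hv
  have hws : HasCompactSupport (fun y => u y - v y) := by
    simpa [sub_eq_add_neg, Pi.add_def, Pi.neg_def] using husupp.add hvsupp.neg
  have hcu := hu.continuous
  have hcv := hv.continuous
  have hrpow : Continuous (fun t : ℝ => |t| ^ (p-2)) := by
    apply continuous_iff_continuousAt.2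
    intro t
    exact (Real.continuousAt_rpow_const _ _ (Or.inr (by linarith))).comp
      continuous_abs.continuousAt
  have hcru : Continuous (fun x => |u x| ^ (p-2)) := hrpow.comp hcu
  have hcrv : Continuous (fun x => |v x| ^ (p-2)) := hrpow.comp hcv
  have hwsq : HasCompactSupport (fun x => (u x - v x)^2) := by
    simpa [sq, Pi.mul_def] using hws.mul_left (f' := fun x => u x - v x)
  have hA : Integrable (fun x => |u x| ^ (p-2) * (u x - v x)^2) :=
    (hcru.mul ((hcu.sub hcv).pow 2)).integrable_of_hasCompactSupport hwsq.mul_left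
  have hB : Integrable (fun x => |v x| ^ (p-2) * (u x - v x)^2) :=
    (hcrv.mul ((hcu.sub hcv).pow 2)).integrable_of_hasCompactSupport hwsq.mul_left
  have hG : Integrable (fun x => (|u x| ^ (p-2) * u x - |v x| ^ (p-2) * v x) * (u x - v x)) :=
    (((hcru.mul hcu).sub (hcrv.mul hcv)).mul (hcu.sub hcv)).integrable_of_hasCompactSupport
      hws.mul_left
  have hlapw : Integrable (fun x => lap (fun y => u y - v y) x * (u x - v x)) :=
    ((aux_lap_cont _ hw).mul (hcu.sub hcv)).integrable_of_hasCompactSupport hws.mul_left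
  -- split the integrand
  have hsplit : (fun x => ((lap u x - |u x| ^ (p - 2) * u x) -
        (lap v x - |v x| ^ (p - 2) * v x)) * (u x - v x))
      = fun x => lap (fun y => u y - v y) x * (u x - v x) -
          (|u x| ^ (p-2) * u x - |v x| ^ (p-2) * v x) * (u x - v x) := by
    funext x
    rw [aux_lap_sub u v hu hv x]
    ring
  have hEq : ∫ x, ((lap u x - |u x| ^ (p - 2) * u x) -
        (lap v x - |v x| ^ (p - 2) * v x)) * (u x - v x)
      = -(∫ x, ‖gradient (fun y => u y - v y) x‖ ^ 2) -
        ∫ x, (|u x| ^ (p-2) * u x - |v x| ^ (p-2) * v x) * (u x - v x) := by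
    rw [hsplit, integral_sub hlapw hG, aux_ibp _ hw hws]
  have hmono : (1/2) * (∫ x, |u x| ^ (p-2) * (u x - v x)^2) +
        (1/2) * (∫ x, |v x| ^ (p-2) * (u x - v x)^2)
      ≤ ∫ x, (|u x| ^ (p-2) * u x - |v x| ^ (p-2) * v x) * (u x - v x) := by
    have h1 : ∫ x, ((1/2) * (|u x| ^ (p-2) * (u x - v x)^2) +
          (1/2) * (|v x| ^ (p-2) * (u x - v x)^2))
        ≤ ∫ x, (|u x| ^ (p-2) * u x - |v x| ^ (p-2) * v x) * (u x - v x) := by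
      refine integral_mono ((hA.const_mul (1/2)).add (hB.const_mul (1/2))) hG fun x => ?_
      have := aux_pointwise p hp (u x) (v x)
      linarith [this]
    rwa [integral_add (hA.const_mul (1/2)) (hB.const_mul (1/2)),
      integral_const_mul, integral_const_mul] at h1
  have hmain : ∫ x, ((lap u x - |u x| ^ (p - 2) * u x) -
        (lap v x - |v x| ^ (p - 2) * v x)) * (u x - v x)
      ≤ -(∫ x, ‖gradient (fun y => u y - v y) x‖ ^ 2) -
        (1 / 2) * (∫ x, |u x| ^ (p - 2) * (u x - v x) ^ 2) -
        (1 / 2) * (∫ x, |v x| ^ (p - 2) * (u x - v x) ^ 2) := by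
    rw [hEq]
    linarith
  refine ⟨hmain, hmain.trans ?_⟩
  have hg0 : 0 ≤ ∫ x, ‖gradient (fun y => u y - v y) x‖ ^ 2 :=
    integral_nonneg fun x => by positivity
  have hA0 : 0 ≤ ∫ x, |u x| ^ (p-2) * (u x - v x)^2 :=
    integral_nonneg fun x => by positivity
  have hB0 : 0 ≤ ∫ x, |v x| ^ (p-2) * (u x - v x)^2 :=
    integral_nonneg fun x => by positivity
  linarith
end

section
/- (Radon–Riesz property) Let X be a uniformly convex real Banach space and let (f_n) be a sequence in X converging weakly to f ∈ X (i.e., φ(f_n) → φ(f) for every continuous linear functional φ : X → ℝ) and such that ‖f_n‖_X → ‖f‖_X. Then f_n converges to f in norm, i.e., ‖f_n − f‖_X → 0. -/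
open Filter Topology

/-- Radon–Riesz property: In a uniformly convex real Banach space `X`,
if `f_n ⇀ f` weakly (i.e. `φ(f_n) → φ(f)` for every continuous linear functional `φ`)
and `‖f_n‖ → ‖f‖`, then `f_n → f` in norm. -/
theorem radon_riesz {X : Type*} [NormedAddCommGroup X] [NormedSpace ℝ X]
    [CompleteSpace X] [UniformConvexSpace X]
    (f : ℕ → X) (f₀ : X)
    (hweak : ∀ φ : X →L[ℝ] ℝ, Tendsto (fun n => φ (f n)) atTop (𝓝 (φ f₀)))
    (hnorm : Tendsto (fun n => ‖f n‖) atTop (𝓝 ‖f₀‖)) :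
    Tendsto (fun n => ‖f n - f₀‖) atTop (𝓝 0) := by
  by_cases h0 : f₀ = 0
  · subst h0; simpa using hnorm
  have hf : (0 : ℝ) < ‖f₀‖ := norm_pos_iff.mpr h0
  obtain ⟨φ, hφ1, hφ2'⟩ := exists_dual_vector ℝ f₀ hf.ne'
  have hφ2 : φ f₀ = ‖f₀‖ := by exact_mod_cast hφ2'
  -- eventually the norms are positive
  have hev : ∀ᶠ n in atTop, (0 : ℝ) < ‖f n‖ := by
    filter_upwards [hnorm.eventually (eventually_gt_nhds (show ‖f₀‖ / 2 < ‖f₀‖ by linarith))]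
      with n hn
    linarith
  have hev' : ∀ᶠ n in atTop, ‖f n‖ ≠ 0 := hev.mono fun n h => h.ne'
  set g : ℕ → X := fun n => ‖f n‖⁻¹ • f n with hg
  set g0 : X := ‖f₀‖⁻¹ • f₀ with hg0def
  have hgn : ∀ᶠ n in atTop, ‖g n‖ = 1 := by
    filter_upwards [hev] with n hn
    simp [hg, norm_smul, abs_of_pos (inv_pos.mpr hn), inv_mul_cancel₀ hn.ne']
  have hg0 : ‖g0‖ = 1 := by
    simp [hg0def, norm_smul, abs_of_pos (inv_pos.mpr hf), inv_mul_cancel₀ hf.ne']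
  have hφg0 : φ g0 = 1 := by
    simp [hg0def, map_smul, hφ2, inv_mul_cancel₀ hf.ne']
  have hφg : Tendsto (fun n => φ (g n)) atTop (𝓝 1) := by
    have : Tendsto (fun n => ‖f n‖⁻¹ * φ (f n)) atTop (𝓝 (‖f₀‖⁻¹ * φ f₀)) :=
      (hnorm.inv₀ hf.ne').mul (hweak φ)
    rw [hφ2, inv_mul_cancel₀ hf.ne'] at this
    simpa [hg, map_smul] using this
  -- ‖g n + g0‖ → 2
  have hsum : Tendsto (fun n => ‖g n + g0‖) atTop (𝓝 2) := by
    have hlow : Tendsto (fun n => φ (g n) + 1) atTop (𝓝 2) := by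
      have h2 : (2 : ℝ) = 1 + 1 := by norm_num
      rw [h2]; exact hφg.add tendsto_const_nhds
    refine tendsto_of_tendsto_of_tendsto_of_le_of_le' hlow tendsto_const_nhds ?_ ?_
    · filter_upwards with n
      calc φ (g n) + 1 = φ (g n + g0) := by rw [map_add, hφg0]
        _ ≤ ‖φ (g n + g0)‖ := by rw [Real.norm_eq_abs]; exact le_abs_self _
        _ ≤ ‖φ‖ * ‖g n + g0‖ := φ.le_opNorm _
        _ = ‖g n + g0‖ := by rw [hφ1, one_mul]
    · filter_upwards [hgn] with n hn
      calc ‖g n + g0‖ ≤ ‖g n‖ + ‖g0‖ := norm_add_le _ _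
        _ = 2 := by rw [hn, hg0]; norm_num
  -- uniform convexity: ‖g n - g0‖ → 0
  have hgconv : Tendsto (fun n => ‖g n - g0‖) atTop (𝓝 0) := by
    rw [tendsto_order]
    constructor
    · intro a ha
      filter_upwards with n
      exact lt_of_lt_of_le ha (norm_nonneg _)
    · intro ε hε
      obtain ⟨δ, hδ, H⟩ := exists_forall_sphere_dist_add_le_two_sub X hε
      have h2 : ∀ᶠ n in atTop, 2 - δ < ‖g n + g0‖ :=
        hsum.eventually (eventually_gt_nhds (by linarith))
      filter_upwards [hgn, h2] with n hn h2n
      by_contra hcon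
      push_neg at hcon
      exact absurd (H hn hg0 hcon) (by linarith)
  have hgtend : Tendsto g atTop (𝓝 g0) :=
    tendsto_iff_norm_sub_tendsto_zero.mpr hgconv
  have hftend : Tendsto f atTop (𝓝 f₀) := by
    have : Tendsto (fun n => ‖f n‖ • g n) atTop (𝓝 (‖f₀‖ • g0)) := hnorm.smul hgtend
    rw [hg0def, smul_inv_smul₀ hf.ne'] at this
    refine this.congr' ?_
    filter_upwards [hev'] with n hn
    simp [hg, smul_inv_smul₀ hn]
  exact tendsto_iff_norm_sub_tendsto_zero.mp hftend
end

section
/- (Strong maximum principle) Let O ⊆ ℝ^d be a bounded, connected, open set, let h : O → ℝ be a bounded function, and let u : ℝ^d → ℝ be continuous on the closure of O and twice continuously differentiable on O, satisfying Δu(x) + h(x)u(x) ≤ 0 and u(x) ≥ 0 for all x ∈ O, u(x) = 0 for all x in the topological boundary ∂O of O, and u not identically zero on O. Then u(x) > 0 for every x ∈ O. -/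
open MeasureTheory

open Set Filter

lemma second_deriv_test {g g' : ℝ → ℝ} {c : ℝ}
    (hg : ∀ᶠ t in nhds (0:ℝ), HasDerivAt g (g' t) t)
    (hg' : HasDerivAt g' c 0)
    (hmin : IsLocalMin g 0) : 0 ≤ c := by
  by_contra hc
  push_neg at hc
  have h0 : g' 0 = 0 := hmin.hasDerivAt_eq_zero hg.self_of_nhds
  have hs := hasDerivAt_iff_tendsto_slope.mp hg'
  have h1 : ∀ᶠ t in nhdsWithin (0:ℝ) {(0:ℝ)}ᶜ, slope g' 0 t < c/2 := by
    have : Iio (c/2) ∈ nhds c := Iio_mem_nhds (by linarith)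
    exact hs this
  have h2 : ∀ᶠ t in nhdsWithin (0:ℝ) (Ioi 0), g' t < 0 := by
    have h1' : ∀ᶠ t in nhdsWithin (0:ℝ) (Ioi 0), slope g' 0 t < c/2 :=
      h1.filter_mono (nhdsWithin_mono 0 (fun t ht => ne_of_gt ht))
    filter_upwards [h1', self_mem_nhdsWithin] with t ht ht0
    rw [slope_def_field] at ht
    simp only [h0, sub_zero] at ht
    have : g' t / t < c/2 := ht
    have ht0' : (0:ℝ) < t := ht0
    nlinarith [div_lt_iff₀ ht0' |>.mp this]
  obtain ⟨δ1, hδ1, hδ1'⟩ := mem_nhdsGT_iff_exists_Ioo_subset.mp h2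
  have hδ1pos : (0:ℝ) < δ1 := hδ1
  obtain ⟨δ2, hδ2, hδ2'⟩ := Metric.eventually_nhds_iff.mp hg
  obtain ⟨δ3, hδ3, hδ3'⟩ := Metric.eventually_nhds_iff.mp hmin
  set δ : ℝ := min (min δ1 δ2) δ3 / 2 with hδdef
  have hδpos : 0 < δ := by positivity
  have hδlt1 : δ < δ1 := by
    have := min_le_left (min δ1 δ2) δ3
    have := min_le_left δ1 δ2
    simp only [hδdef]; linarith [min_le_left (min δ1 δ2) δ3, min_le_left δ1 δ2, hδ2, hδ3]
  have hδlt2 : δ < δ2 := by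
    simp only [hδdef]; linarith [min_le_left (min δ1 δ2) δ3, min_le_right δ1 δ2, hδ1pos, hδ3]
  have hδlt3 : δ < δ3 := by
    simp only [hδdef]; linarith [min_le_right (min δ1 δ2) δ3, hδ1pos, hδ2]
  have hanti : StrictAntiOn g (Icc 0 δ) := by
    apply strictAntiOn_of_deriv_neg (convex_Icc 0 δ)
    · intro t ht
      have : |t| < δ2 := by
        rw [abs_lt]; constructor <;> [linarith [ht.1]; linarith [ht.2]]
      have := hδ2' (by simpa [Real.dist_eq] using this)
      exact this.continuousAt.continuousWithinAt
    · intro t ht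
      rw [interior_Icc] at ht
      have hd : HasDerivAt g (g' t) t := by
        apply hδ2'
        simp only [Real.dist_eq, sub_zero]
        rw [abs_lt]; constructor <;> [linarith [ht.1]; linarith [ht.2]]
      rw [hd.deriv]
      exact hδ1' ⟨ht.1, by linarith [ht.2]⟩
  have hmem0 : (0:ℝ) ∈ Icc 0 δ := ⟨le_refl 0, le_of_lt hδpos⟩
  have hmemδ : δ ∈ Icc 0 δ := ⟨le_of_lt hδpos, le_refl δ⟩
  have := hanti hmem0 hmemδ hδpos
  have hge : g 0 ≤ g δ := by
    apply hδ3'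
    simp only [Real.dist_eq, sub_zero]
    rw [abs_of_pos hδpos]; exact hδlt3
  linarith

lemma key_ineq {d : ℕ} {O : Set (EuclideanSpace ℝ (Fin d))} (hO : IsOpen O)
    {u : EuclideanSpace ℝ (Fin d) → ℝ} (huC2 : ContDiffOn ℝ 2 u O)
    {x z : EuclideanSpace ℝ (Fin d)} (hx : x ∈ O) (ε α K : ℝ)
    (hmin : IsLocalMin
      (fun y => u y - ε * (Real.exp (-α * ∑ i, (y i - z i)^2) - K)) x) :
    ε * ((4*α^2 * (∑ i, (x i - z i)^2) - 2*(d:ℝ)*α) *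
      Real.exp (-α * ∑ i, (x i - z i)^2)) ≤ lap u x := by
  classical
  set Q : ℝ := ∑ i, (x i - z i)^2 with hQ
  -- differentiability facts
  have hUmem : O ∈ nhds x := hO.mem_nhds hx
  have hCA : ContDiffAt ℝ 2 u x := huC2.contDiffAt hUmem
  have hu1 : ∀ y ∈ O, HasFDerivAt u (fderiv ℝ u y) y := by
    intro y hy
    exact ((huC2.contDiffAt (hO.mem_nhds hy)).differentiableAt
      (by norm_num)).hasFDerivAt
  have hu2 : DifferentiableAt ℝ (fun y => fderiv ℝ u y) x :=
    (hCA.fderiv_right (m := 1) (by norm_num)).differentiableAt (by norm_num)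
  -- per-direction bound
  have hdir : ∀ i : Fin d,
      ε * (Real.exp (-α * Q) * (4*α^2*(x i - z i)^2 - 2*α)) ≤
      fderiv ℝ (fun y => fderiv ℝ u y (EuclideanSpace.single i (1:ℝ))) x
        (EuclideanSpace.single i (1:ℝ)) := by
    intro i
    set e : EuclideanSpace ℝ (Fin d) := EuclideanSpace.single i (1:ℝ) with he
    set b : ℝ := x i - z i with hb
    set ℓ : ℝ → EuclideanSpace ℝ (Fin d) := fun t => x + t • e with hℓ
    have hℓ0 : ℓ 0 = x := by simp [hℓ]
    have hℓder : ∀ t, HasDerivAt ℓ e t := by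
      intro t
      have h1 : HasDerivAt (fun s : ℝ => s • e) ((1:ℝ) • e) t :=
        (hasDerivAt_id t).smul_const e
      simpa [hℓ] using h1.const_add x
    have hℓcont : Continuous ℓ := by
      exact continuous_const.add (continuous_id.smul continuous_const)
    have hq : ∀ t : ℝ, (∑ j, ((ℓ t) j - z j)^2) = Q + 2*t*b + t^2 := by
      intro t
      have happ : ∀ j, (ℓ t) j = x j + t * (if j = i then (1:ℝ) else 0) := by
        intro j
        simp [hℓ, he, EuclideanSpace.single_apply, PiLp.add_apply, PiLp.smul_apply,
          smul_eq_mul]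
      have : ∀ j, ((ℓ t) j - z j)^2
          = (x j - z j)^2 + (if j = i then 2*t*(x j - z j) + t^2 else 0) := by
        intro j
        rw [happ j]
        by_cases hij : j = i <;> simp [hij] <;> ring
      rw [Finset.sum_congr rfl (fun j _ => this j), Finset.sum_add_distrib,
        Finset.sum_ite_eq']
      simp only [Finset.mem_univ, if_true]
      rw [← hQ, ← hb]
      ring
    -- the 1-D functions
    set g : ℝ → ℝ := fun t =>
      u (ℓ t) - ε * (Real.exp (-α * (Q + 2*t*b + t^2)) - K) with hg_def
    set g' : ℝ → ℝ := fun t =>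
      fderiv ℝ u (ℓ t) e -
        ε * (Real.exp (-α * (Q + 2*t*b + t^2)) * (-α*(2*b+2*t))) with hg'_def
    have hpoly : ∀ t : ℝ, HasDerivAt (fun s : ℝ => -α * (Q + 2*s*b + s^2))
        (-α*(2*b+2*t)) t := by
      intro t
      have h1 : HasDerivAt (fun s : ℝ => Q + 2*s*b + s^2) (2*b+2*t) t := by
        have h2 : HasDerivAt (fun s : ℝ => 2*s) (2:ℝ) t := by
          simpa using (hasDerivAt_id t).const_mul (2:ℝ)
        have h3 := (h2.mul_const b).const_add Q
        have h4 := h3.add (hasDerivAt_pow 2 t)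
        have h5 : HasDerivAt (fun s : ℝ => Q + 2*s*b + s^2) (2*b + ↑2 * t^(2-1)) t := h4
        exact h5.congr_deriv (by norm_num)
      exact h1.const_mul (-α)
    have hexp : ∀ t : ℝ, HasDerivAt
        (fun s : ℝ => Real.exp (-α * (Q + 2*s*b + s^2)))
        (Real.exp (-α * (Q + 2*t*b + t^2)) * (-α*(2*b+2*t))) t :=
      fun t => (hpoly t).exp
    have hgder : ∀ᶠ t in nhds (0:ℝ), HasDerivAt g (g' t) t := by
      have hmemO : ∀ᶠ t in nhds (0:ℝ), ℓ t ∈ O := by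
        have : ContinuousAt ℓ 0 := hℓcont.continuousAt
        have := this.preimage_mem_nhds (by rw [hℓ0]; exact hUmem)
        exact this
      filter_upwards [hmemO] with t ht
      have hu : HasDerivAt (fun s => u (ℓ s)) (fderiv ℝ u (ℓ t) e) t :=
        (hu1 _ ht).comp_hasDerivAt t (hℓder t)
      exact hu.sub (((hexp t).sub_const K).const_mul ε)
    have hg'der : HasDerivAt g'
        (fderiv ℝ (fun y => fderiv ℝ u y e) x e -
          ε * (Real.exp (-α * Q) * (4*α^2*b^2 - 2*α))) 0 := by
      have hA : DifferentiableAt ℝ (fun y => fderiv ℝ u y e) x :=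
        hu2.clm_apply (differentiableAt_const e)
      have h1 : HasDerivAt (fun t => fderiv ℝ u (ℓ t) e)
          (fderiv ℝ (fun y => fderiv ℝ u y e) x e) 0 :=
        hA.hasFDerivAt.comp_hasDerivAt_of_eq 0 (hℓder 0) hℓ0.symm
      have h2 : HasDerivAt (fun t : ℝ => -α*(2*b+2*t)) (-α*2) 0 := by
        have h3 : HasDerivAt (fun t : ℝ => 2*b+2*t) (2:ℝ) 0 := by
          simpa using ((hasDerivAt_id (0:ℝ)).const_mul (2:ℝ)).const_add (2*b)
        exact h3.const_mul (-α)
      have h4 := ((hexp 0).mul h2).const_mul ε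
      have h5 := h1.sub h4
      refine h5.congr_deriv ?_
      have : -α * (Q + 2*0*b + 0^2) = -α * Q := by ring
      rw [this]
      ring
    have hlm : IsLocalMin g 0 := by
      have h1 : IsLocalMin
          ((fun y => u y - ε * (Real.exp (-α * ∑ j, (y j - z j)^2) - K)) ∘ ℓ) 0 := by
        apply IsLocalMin.comp_continuous _ hℓcont.continuousAt
        rw [hℓ0]; exact hmin
      have h2 : ((fun y => u y - ε * (Real.exp (-α * ∑ j, (y j - z j)^2) - K)) ∘ ℓ)
          = g := by
        funext t
        simp only [Function.comp_apply, hg_def, hq t]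
      rwa [h2] at h1
    have := second_deriv_test hgder hg'der hlm
    nlinarith [this]
  -- sum over directions
  have hsum := Finset.sum_le_sum (fun i (_ : i ∈ Finset.univ) => hdir i)
  rw [lap]
  calc ε * ((4*α^2 * Q - 2*(d:ℝ)*α) * Real.exp (-α * Q))
      = ∑ i : Fin d, ε * (Real.exp (-α * Q) * (4*α^2*(x i - z i)^2 - 2*α)) := by
        have h1 : ∑ i : Fin d, (4*α^2*(x i - z i)^2 - 2*α) = 4*α^2*Q - 2*(d:ℝ)*α := by
          rw [Finset.sum_sub_distrib, ← Finset.mul_sum, Finset.sum_const,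
            Finset.card_univ, Fintype.card_fin, nsmul_eq_mul, ← hQ]
          ring
        rw [← Finset.mul_sum, ← Finset.mul_sum, h1]
        ring
    _ ≤ _ := hsum

set_option maxHeartbeats 2000000 in
/-- Strong maximum principle: Let `O ⊆ ℝ^d` be a bounded, connected,
open set, `h` bounded on `O`, and `u` continuous on `closure O`, `C²` on `O`, with
`Δu + h u ≤ 0` and `u ≥ 0` on `O`, `u = 0` on `∂O`, and `u` not identically zero on
`O`. Then `u > 0` on `O`. -/
theorem strong_maximum_principle (d : ℕ) (O : Set (EuclideanSpace ℝ (Fin d)))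
    (hO : IsOpen O) (hObdd : Bornology.IsBounded O) (hOconn : IsConnected O)
    (h u : EuclideanSpace ℝ (Fin d) → ℝ)
    (hbdd : ∃ M : ℝ, ∀ x ∈ O, |h x| ≤ M)
    (hucont : ContinuousOn u (closure O)) (huC2 : ContDiffOn ℝ 2 u O)
    (hineq : ∀ x ∈ O, lap u x + h x * u x ≤ 0)
    (hunneg : ∀ x ∈ O, 0 ≤ u x)
    (hubd : ∀ x ∈ frontier O, u x = 0)
    (hunz : ∃ x ∈ O, u x ≠ 0) :
    ∀ x ∈ O, 0 < u x := by
  classical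
  obtain ⟨M0, hM0⟩ := hbdd
  set M : ℝ := max M0 1 with hM
  have hM1 : (1:ℝ) ≤ M := le_max_right _ _
  have hMpos : (0:ℝ) < M := by linarith
  have hcontO : ContinuousOn u O := huC2.continuousOn
  have hlapM : ∀ x ∈ O, lap u x ≤ M * u x := by
    intro x hx
    have h1 := hineq x hx
    have h2 := (hM0 x hx).trans (le_max_left M0 1)
    have h3 := hunneg x hx
    have h4 := abs_le.mp h2
    nlinarith [h4.1, h4.2]
  intro x₀ hx₀
  rcases lt_or_eq_of_le (hunneg x₀ hx₀) with hlt | heq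
  · exact hlt
  exfalso
  have hux₀ : u x₀ = 0 := heq.symm
  set P : Set (EuclideanSpace ℝ (Fin d)) := O ∩ u ⁻¹' (Ioi 0) with hP
  have hPopen : IsOpen P := hcontO.isOpen_inter_preimage hO isOpen_Ioi
  have hPne : P.Nonempty := by
    obtain ⟨p, hp, hpne⟩ := hunz
    exact ⟨p, hp, lt_of_le_of_ne (hunneg p hp) (Ne.symm hpne)⟩
  have hx₀P : x₀ ∉ P := by
    intro hc
    exact absurd hux₀ (ne_of_gt hc.2)
  -- find a zero point in O touching closure of P
  have hyex : ∃ y ∈ O, y ∈ closure P ∧ y ∉ P := by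
    by_contra hcon
    push_neg at hcon
    have happly := hOconn.isPreconnected P (closure P)ᶜ hPopen
      isClosed_closure.isOpen_compl ?_ ?_ ?_
    · obtain ⟨yy, _, hy1, hy2⟩ := happly
      exact hy2 (subset_closure hy1)
    · intro yy hyy
      by_cases hyP : yy ∈ closure P
      · exact Or.inl (hcon yy hyy hyP)
      · exact Or.inr hyP
    · obtain ⟨p, hp⟩ := hPne
      exact ⟨p, hp.1, hp⟩
    · exact ⟨x₀, hx₀, fun hc => hx₀P (hcon x₀ hx₀ hc)⟩
  obtain ⟨y, hyO, hyCl, hyNP⟩ := hyex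
  have huy : u y = 0 := by
    rcases lt_or_eq_of_le (hunneg y hyO) with h' | h'
    · exact absurd ⟨hyO, h'⟩ hyNP
    · exact h'.symm
  obtain ⟨r0, hr0pos, hr0⟩ := Metric.nhds_basis_closedBall.mem_iff.mp (hO.mem_nhds hyO)
  obtain ⟨x1, hx1P, hx1d⟩ := Metric.mem_closure_iff.mp hyCl (r0/4) (by positivity)
  have hx1O : x1 ∈ O := hx1P.1
  have hux1 : 0 < u x1 := hx1P.2
  set ρ : ℝ := dist x1 y with hρ
  have hρpos : 0 < ρ := by
    rw [hρ, dist_pos]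
    intro hc
    rw [hc, huy] at hux1
    exact lt_irrefl 0 hux1
  have hρlt : ρ < r0/4 := by rw [hρ, dist_comm]; exact hx1d
  set r2 : ℝ := r0/2 with hr2
  have hr2pos : 0 < r2 := by positivity
  have hball2 : Metric.closedBall x1 r2 ⊆ O := by
    intro w hw
    apply hr0
    have h1 : dist w x1 ≤ r2 := Metric.mem_closedBall.mp hw
    have h2 : dist w y ≤ dist w x1 + dist x1 y := dist_triangle _ _ _
    have : dist w y ≤ r0 := by rw [hr2] at h1; linarith
    exact Metric.mem_closedBall.mpr this
  -- δ with u > 0 near x1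
  have hcx1 : ContinuousAt u x1 := hcontO.continuousAt (hO.mem_nhds hx1O)
  have hev : ∀ᶠ w in nhds x1, 0 < u w := hcx1.eventually (eventually_gt_nhds hux1)
  obtain ⟨δ, hδpos, hδ⟩ := Metric.eventually_nhds_iff.mp hev
  set r1 : ℝ := min δ ρ / 2 with hr1
  have hr1pos : 0 < r1 := by positivity
  have hr1δ : r1 < δ := by
    rw [hr1]
    have := min_le_left δ ρ
    linarith [hρpos, min_le_left δ ρ]
  have hr1ρ : r1 < ρ := by
    rw [hr1]
    linarith [min_le_right δ ρ, hδpos]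
  have hρr2 : ρ < r2 := by rw [hr2]; linarith
  have hr1r2 : r1 < r2 := lt_trans hr1ρ hρr2
  -- choose α
  set α : ℝ := max 1 ((2*(d:ℝ) + M)/(4*r1^2)) with hα
  have hα1 : (1:ℝ) ≤ α := le_max_left _ _
  have hαpos : 0 < α := by linarith
  have hαineq : 2*(d:ℝ)*α + M ≤ 4*α^2*r1^2 := by
    have h1 : (2*(d:ℝ) + M)/(4*r1^2) ≤ α := le_max_right _ _
    have h2 : 2*(d:ℝ) + M ≤ α * (4*r1^2) := by
      rw [div_le_iff₀ (by positivity)] at h1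
      linarith
    nlinarith [hα1, hMpos, Nat.cast_nonneg (α := ℝ) d, sq_nonneg r1]
  set K : ℝ := Real.exp (-α * r2^2) with hK
  have hKpos : 0 < K := Real.exp_pos _
  set q : EuclideanSpace ℝ (Fin d) → ℝ := fun w => ∑ i, (w i - x1 i)^2 with hqdef
  have hq_dist : ∀ w, q w = dist w x1 ^ 2 := by
    intro w
    rw [EuclideanSpace.dist_eq, Real.sq_sqrt]
    · exact Finset.sum_congr rfl fun i _ => by
        rw [Real.dist_eq, sq_abs]
    · exact Finset.sum_nonneg fun i _ => sq_nonneg _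
  set v : EuclideanSpace ℝ (Fin d) → ℝ :=
    fun w => Real.exp (-α * q w) - K with hvdef
  have hvcont : Continuous v := by
    apply Continuous.sub _ continuous_const
    apply Real.continuous_exp.comp
    apply Continuous.mul continuous_const
    exact continuous_finset_sum _ fun i _ =>
      ((EuclideanSpace.proj i).continuous.sub continuous_const).pow 2
  have hvle1 : ∀ w, v w ≤ 1 := by
    intro w
    have h1 : Real.exp (-α * q w) ≤ 1 := by
      apply Real.exp_le_one_iff.mpr
      have : 0 ≤ q w := by rw [hq_dist]; positivity
      nlinarith
    show Real.exp (-α * q w) - K ≤ 1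
    linarith
  -- sphere point and minimum m on sphere r1
  have hsne : (Metric.sphere x1 r1).Nonempty := by
    refine ⟨x1 + (r1/ρ) • (y - x1), ?_⟩
    have : dist (x1 + (r1/ρ) • (y - x1)) x1 = r1 := by
      rw [dist_eq_norm]
      have : x1 + (r1/ρ) • (y - x1) - x1 = (r1/ρ) • (y - x1) := by abel
      rw [this, norm_smul]
      have hny : ‖y - x1‖ = ρ := by
        rw [hρ, dist_eq_norm, ← norm_neg]
        congr 1
        abel
      rw [hny, Real.norm_eq_abs, abs_of_pos (by positivity)]
      field_simp
    simpa [Metric.mem_sphere] using this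
  have hsphO : Metric.sphere x1 r1 ⊆ O := fun w hw => by
    apply hball2
    have := Metric.mem_sphere.mp hw
    rw [Metric.mem_closedBall, this]
    linarith
  obtain ⟨xm, hxm, hxmmin⟩ := (isCompact_sphere x1 r1).exists_isMinOn hsne
    (hcontO.mono hsphO)
  set m : ℝ := u xm with hm
  have hmpos : 0 < m := by
    apply hδ
    have := Metric.mem_sphere.mp hxm
    rw [this]
    exact hr1δ
  -- the annulus
  set A : Set (EuclideanSpace ℝ (Fin d)) :=
    Metric.ball x1 r2 \ Metric.closedBall x1 r1 with hA
  have hAopen : IsOpen A := Metric.isOpen_ball.sdiff Metric.isClosed_closedBall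
  have hclA : closure A ⊆ Metric.closedBall x1 r2 \ Metric.ball x1 r1 := by
    apply closure_minimal _ (Metric.isClosed_closedBall.sdiff Metric.isOpen_ball)
    intro w hw
    exact ⟨Metric.ball_subset_closedBall hw.1, fun hc => hw.2 (Metric.ball_subset_closedBall hc)⟩
  have hclAO : closure A ⊆ O := fun w hw => hball2 (hclA hw).1
  have hAcompact : IsCompact (closure A) :=
    (isCompact_closedBall x1 r2).of_isClosed_subset isClosed_closure
      (fun w hw => (hclA hw).1)
  have hyA : y ∈ A := by
    constructor
    · rw [Metric.mem_ball, dist_comm, ← hρ]; exact hρr2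
    · rw [Metric.mem_closedBall, dist_comm, ← hρ]; linarith
  -- the function W and its minimum
  set W : EuclideanSpace ℝ (Fin d) → ℝ := fun w => u w - m * v w with hW
  have hWcont : ContinuousOn W (closure A) :=
    (hcontO.mono hclAO).sub (continuous_const.mul hvcont).continuousOn
  obtain ⟨xs, hxs, hxsmin⟩ := hAcompact.exists_isMinOn
    ⟨y, subset_closure hyA⟩ hWcont
  -- boundary nonnegativity
  have hbdnn : ∀ p ∈ closure A \ A, 0 ≤ W p := by
    intro p hp
    have hpK := hclA hp.1
    have hup : 0 ≤ u p := hunneg p (hclAO hp.1)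
    have h1 : r1 ≤ dist p x1 := not_lt.mp (fun hc => hpK.2 (Metric.mem_ball.mpr hc))
    have h2 : dist p x1 ≤ r2 := Metric.mem_closedBall.mp hpK.1
    have hcase : dist p x1 = r1 ∨ dist p x1 = r2 := by
      rcases eq_or_lt_of_le h1 with hc1 | hc1
      · exact Or.inl hc1.symm
      rcases eq_or_lt_of_le h2 with hc2 | hc2
      · exact Or.inr hc2
      exfalso
      exact hp.2 ⟨Metric.mem_ball.mpr hc2, fun hc => absurd (Metric.mem_closedBall.mp hc)
        (not_le.mpr hc1)⟩
    rcases hcase with hcase | hcase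
    · have hps : p ∈ Metric.sphere x1 r1 := Metric.mem_sphere.mpr hcase
      have hum : m ≤ u p := hxmmin hps
      have hvp := hvle1 p
      show 0 ≤ u p - m * v p
      nlinarith [hmpos, mul_nonneg hmpos.le (sub_nonneg.mpr hvp)]
    · have hqp : q p = r2^2 := by rw [hq_dist, hcase]
      have hvp : v p = 0 := by
        show Real.exp (-α * q p) - K = 0
        rw [hqp, hK, sub_self]
      show 0 ≤ u p - m * v p
      rw [hvp]
      simpa using hup
  -- W y < 0
  have hWy : W y < 0 := by
    have hqy : q y = ρ^2 := by rw [hq_dist, dist_comm, ← hρ]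
    have hvy : 0 < v y := by
      show 0 < Real.exp (-α * q y) - K
      rw [hqy, hK, sub_pos]
      apply Real.exp_lt_exp.mpr
      nlinarith [hρpos, hρr2, hαpos, mul_pos hαpos
        (show (0:ℝ) < r2^2 - ρ^2 by nlinarith [hρpos, hρr2])]
    show u y - m * v y < 0
    rw [huy]
    nlinarith [hmpos]
  have hWxs_neg : W xs < 0 := lt_of_le_of_lt (hxsmin (subset_closure hyA)) hWy
  have hxsA : xs ∈ A := by
    by_contra hc
    exact absurd (hbdnn xs ⟨hxs, hc⟩) (not_le.mpr hWxs_neg)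
  have hxsO : xs ∈ O := hclAO hxs
  -- local min
  have hlm : IsLocalMin W xs :=
    hxsmin.isLocalMin (mem_of_superset (hAopen.mem_nhds hxsA) subset_closure)
  -- key inequality at xs
  have hlm' : IsLocalMin
      (fun w => u w - m * (Real.exp (-α * ∑ i, (w i - x1 i)^2) - K)) xs := hlm
  have hki : m * ((4*α^2 * (∑ i, (xs i - x1 i)^2) - 2*(d:ℝ)*α) *
      Real.exp (-α * ∑ i, (xs i - x1 i)^2)) ≤ lap u xs :=
    key_ineq hO huC2 hxsO m α K hlm'
  have hqxs : (∑ i, (xs i - x1 i)^2) = q xs := rfl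
  rw [hqxs] at hki
  have hq_xs1 : r1^2 ≤ q xs := by
    have h1 : r1 < dist xs x1 := not_le.mp fun hc => hxsA.2 (Metric.mem_closedBall.mpr hc)
    rw [hq_dist]
    nlinarith [dist_nonneg (x := xs) (y := x1), hr1pos]
  set E : ℝ := Real.exp (-α * q xs) with hE
  have hEpos : 0 < E := Real.exp_pos _
  have hvxs : v xs = E - K := rfl
  have h1 : lap u xs ≤ M * u xs := hlapM xs hxsO
  have h2 : M + 2*(d:ℝ)*α ≤ 4*α^2 * q xs := by
    have h3 : 0 ≤ 4*α^2 * (q xs - r1^2) :=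
      mul_nonneg (by positivity) (by linarith)
    nlinarith [hαineq]
  have h3 : M * (E - K) ≤ (4*α^2 * q xs - 2*(d:ℝ)*α) * E := by
    have h4 : 0 ≤ (4*α^2 * q xs - 2*(d:ℝ)*α - M) * E :=
      mul_nonneg (by linarith) hEpos.le
    nlinarith [hKpos, hMpos]
  have h5 : m * (M * (E - K)) ≤ M * u xs := by
    calc m * (M * (E - K)) ≤ m * ((4*α^2 * q xs - 2*(d:ℝ)*α) * E) :=
          mul_le_mul_of_nonneg_left h3 hmpos.le
      _ ≤ lap u xs := hki
      _ ≤ M * u xs := h1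
  have h6 : 0 ≤ W xs := by
    show 0 ≤ u xs - m * v xs
    rw [hvxs]
    by_contra hc
    push_neg at hc
    have h7 : 0 < M * (m * (E - K) - u xs) := mul_pos hMpos (by linarith)
    nlinarith [h5, h7]
  exact absurd h6 (not_le.mpr hWxs_neg)
end
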